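/- arXiv:2110.10193 — 4 statements merged into one kernel-verified Lean document; each statement's English description precedes it below -/
import Mathlib

section
/- For any two random variables X and Y on a probability space, |E(exp(iuX) | Y)|² ≤ 1 - (ψ')²(1 - |E(exp(iuX))|²) almost surely, where ψ' = ψ'(σ(Y), σ(X)) is the lower psi-mixing coefficient. -/
open MeasureTheory Complex

/-- lower psi-mixing coefficient of two sub-sigma-algebras. -/
noncomputable def psiLower {Ω : Type*} [MeasurableSpace Ω] (μ : Measure Ω)
    (𝒜 ℬ : MeasurableSpace Ω) : ℝ :=
  sInf { r : ℝ | ∃ A B : Set Ω, MeasurableSet[𝒜] A ∧ MeasurableSet[ℬ] B ∧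
    0 < (μ A).toReal * (μ B).toReal ∧
    r = (μ (A ∩ B)).toReal / ((μ A).toReal * (μ B).toReal) }

/-- If `Re (exp (-q i) w) ≤ s` for all rationals `q`, then `‖w‖ ≤ s`. -/
lemma norm_le_of_forall_rat (w : ℂ) (s : ℝ)
    (h : ∀ q : ℚ, (Complex.exp (-(q : ℝ) * I) * w).re ≤ s) : ‖w‖ ≤ s := by
  have hcont : Continuous fun θ : ℝ => (Complex.exp (-(θ : ℂ) * I) * w).re := by
    fun_prop
  have hclosed : IsClosed {θ : ℝ | (Complex.exp (-(θ : ℂ) * I) * w).re ≤ s} :=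
    isClosed_le hcont continuous_const
  have hall : ∀ θ : ℝ, (Complex.exp (-(θ : ℂ) * I) * w).re ≤ s := by
    intro θ
    have hdense : Dense (Set.range ((↑) : ℚ → ℝ)) := Rat.denseRange_cast
    have hsub : Set.range ((↑) : ℚ → ℝ) ⊆
        {θ : ℝ | (Complex.exp (-(θ : ℂ) * I) * w).re ≤ s} := by
      rintro _ ⟨q, rfl⟩; exact h q
    have := hclosed.closure_subset_iff.mpr hsub
    have hθ : θ ∈ closure (Set.range ((↑) : ℚ → ℝ)) := hdense θ
    exact this hθ
  have key : Complex.exp (-(w.arg : ℂ) * I) * w = ((‖w‖ : ℝ) : ℂ) := by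
    nth_rewrite 2 [← Complex.norm_mul_exp_arg_mul_I w]
    rw [mul_comm, mul_assoc, ← Complex.exp_add]
    simp
  have := hall w.arg
  rw [key] at this
  simpa using this

/-- a.e. bound on the conditional expectation from uniform set-integral bounds. -/
lemma ae_norm_condexp_le {Ω : Type*} [m : MeasurableSpace Ω] (μ : Measure Ω)
    [IsProbabilityMeasure μ] {𝒢 : MeasurableSpace Ω} (hm : 𝒢 ≤ m) (f : Ω → ℂ)
    (hf : Integrable f μ) (s : ℝ)
    (hs : ∀ A : Set Ω, MeasurableSet[𝒢] A → ‖∫ ω in A, f ω ∂μ‖ ≤ s * (μ A).toReal) :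
    ∀ᵐ ω ∂μ, ‖(μ[f|𝒢]) ω‖ ≤ s := by
  haveI : SigmaFinite (μ.trim hm) := (isFiniteMeasure_trim hm).toSigmaFinite
  set G := μ[f|𝒢] with hG
  have hGsm : StronglyMeasurable[𝒢] G := stronglyMeasurable_condExp
  have hGint : Integrable G μ := integrable_condExp
  -- for each unit z, the set where Re (z * G) > s is null
  have key : ∀ z : ℂ, ‖z‖ = 1 → μ {ω | s < (z * G ω).re} = 0 := by
    intro z hz
    set A : Set Ω := {ω | s < (z * G ω).re} with hA
    have hAmeas𝒢 : MeasurableSet[𝒢] A := by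
      have : Measurable[𝒢] fun ω => (z * G ω).re := by
        exact (Complex.measurable_re.comp ((measurable_const.mul hGsm.measurable)))
      exact this measurableSet_Ioi
    have hAmeas : MeasurableSet[m] A := hm _ hAmeas𝒢
    by_contra hpos
    have hμA : 0 < μ A := pos_iff_ne_zero.mpr hpos
    have hint : Integrable (fun ω => (z * G ω).re - s) μ :=
      ((hGint.const_mul z).re).sub (integrable_const s)
    have hintA : Integrable (fun ω => (z * G ω).re - s) (μ.restrict A) := hint.restrict
    have hsuppA : Function.support (fun ω => (z * G ω).re - s) ∩ A = A := by
      apply Set.inter_eq_right.mpr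
      intro ω hω
      have : s < (z * G ω).re := hω
      simp only [Function.mem_support]
      intro habs
      nlinarith [habs]
    have hnonneg : ∀ᵐ ω ∂(μ.restrict A), 0 ≤ (z * G ω).re - s := by
      filter_upwards [ae_restrict_mem hAmeas] with ω hω
      have : s < (z * G ω).re := hω
      linarith
    have hpos' : 0 < ∫ ω in A, ((z * G ω).re - s) ∂μ := by
      rw [@setIntegral_pos_iff_support_of_nonneg_ae Ω m A μ _ hnonneg hintA, hsuppA]
      exact hμA
    -- but the integral is also nonpositive
    have hInt1 : ∫ ω in A, ((z * G ω).re - s) ∂μ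
        = (z * ∫ ω in A, G ω ∂μ).re - s * (μ A).toReal := by
      have h1 : ∫ ω in A, ((z * G ω).re - s) ∂μ
          = (∫ ω in A, (z * G ω).re ∂μ) - ∫ ω in A, (s : ℝ) ∂μ :=
        integral_sub ((hGint.const_mul z).re).restrict (integrable_const s).restrict
      have h2 : ∫ ω in A, (z * G ω).re ∂μ = (∫ ω in A, z * G ω ∂μ).re :=
        @integral_re Ω m (μ.restrict A) ℂ _ _ ((hGint.const_mul z)).restrict
      have h3 : ∫ ω in A, z * G ω ∂μ = z * ∫ ω in A, G ω ∂μ :=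
        integral_const_mul z _
      rw [h1, h2, h3, integral_const]
      simp [smul_eq_mul, mul_comm, Measure.real]
    have hcond : ∫ ω in A, G ω ∂μ = ∫ ω in A, f ω ∂μ :=
      setIntegral_condExp hm hf hAmeas𝒢
    have hre : (z * ∫ ω in A, G ω ∂μ).re ≤ s * (μ A).toReal := by
      rw [hcond]
      calc (z * ∫ ω in A, f ω ∂μ).re ≤ ‖z * ∫ ω in A, f ω ∂μ‖ := Complex.re_le_norm _
        _ = ‖∫ ω in A, f ω ∂μ‖ := by rw [norm_mul, hz, one_mul]
        _ ≤ s * (μ A).toReal := hs A hAmeas𝒢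
    rw [hInt1] at hpos'
    linarith
  have hae : ∀ᵐ ω ∂μ, ∀ q : ℚ, (Complex.exp (-(q : ℝ) * I) * G ω).re ≤ s := by
    rw [ae_all_iff]
    intro q
    have hz : ‖Complex.exp (-((q : ℝ) : ℂ) * I)‖ = 1 := by
      rw [show (-((q : ℝ) : ℂ) * I) = ((-(q : ℝ) : ℝ) : ℂ) * I by push_cast; ring]
      exact Complex.norm_exp_ofReal_mul_I _
    have hk := key _ hz
    simpa only [ae_iff, not_le] using hk
  filter_upwards [hae] with ω hω
  exact norm_le_of_forall_rat (G ω) s hω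

/-- Lemma 7 of the paper: for any two random variables `X` and `Y`,
`|E(exp(iuX) | Y)|² ≤ 1 - ψ'² (1 - |E exp(iuX)|²)` a.s., where
`ψ' = ψ'(σ(Y), σ(X))`. -/
theorem condexp_charFun_bound {Ω : Type*} [m : MeasurableSpace Ω] (μ : Measure Ω)
    [IsProbabilityMeasure μ] (X Y : Ω → ℝ) (hX : Measurable X) (hY : Measurable Y)
    (u : ℝ) :
    ∀ᵐ ω ∂μ,
      ‖(μ[fun ω' => Complex.exp (u * X ω' * I) | MeasurableSpace.comap Y inferInstance]) ω‖ ^ 2 ≤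
        1 - (@psiLower Ω m μ (MeasurableSpace.comap Y inferInstance)
              (MeasurableSpace.comap X inferInstance)) ^ 2 *
          (1 - ‖∫ ω' , Complex.exp (u * X ω' * I) ∂μ‖ ^ 2) := by
  set 𝒢 : MeasurableSpace Ω := MeasurableSpace.comap Y inferInstance with h𝒢
  set ℬ : MeasurableSpace Ω := MeasurableSpace.comap X inferInstance with hℬ
  have hmG : 𝒢 ≤ m := hY.comap_le
  have hmB : ℬ ≤ m := hX.comap_le
  set f : Ω → ℂ := fun ω' => Complex.exp (u * X ω' * I) with hfdef
  have hXB : Measurable[ℬ] X := measurable_iff_comap_le.mpr le_rfl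
  have hfB : StronglyMeasurable[ℬ] f := by
    have hc : Continuous fun x : ℝ => Complex.exp (u * x * I) := by fun_prop
    exact (hc.measurable.comp hXB).stronglyMeasurable
  have hfnorm : ∀ ω, ‖f ω‖ = 1 := by
    intro ω
    show ‖Complex.exp (u * X ω * I)‖ = 1
    rw [show ((u : ℂ) * (X ω : ℂ) * I) = ((u * X ω : ℝ) : ℂ) * I by push_cast; ring]
    exact Complex.norm_exp_ofReal_mul_I _
  have hfint : Integrable f μ :=
    Integrable.mono' (integrable_const 1) (hfB.mono hmB).aestronglyMeasurable
      (ae_of_all _ fun ω => (hfnorm ω).le)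
  set φ : ℂ := ∫ ω', f ω' ∂μ with hφ
  set t : ℝ := ‖φ‖ with ht
  have ht0 : 0 ≤ t := norm_nonneg _
  have ht1 : t ≤ 1 := by
    rw [ht, hφ]
    calc ‖∫ ω', f ω' ∂μ‖ ≤ ∫ ω', ‖f ω'‖ ∂μ := norm_integral_le_integral_norm f
      _ = 1 := by simp [hfnorm]
  set S : Set ℝ := { r : ℝ | ∃ A B : Set Ω, MeasurableSet[𝒢] A ∧ MeasurableSet[ℬ] B ∧
    0 < (μ A).toReal * (μ B).toReal ∧
    r = (μ (A ∩ B)).toReal / ((μ A).toReal * (μ B).toReal) } with hS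
  set a : ℝ := @psiLower Ω m μ 𝒢 ℬ with hadef
  have haS : a = sInf S := rfl
  have hmem1 : (1 : ℝ) ∈ S := by
    refine ⟨Set.univ, Set.univ, MeasurableSet.univ, MeasurableSet.univ, by simp, by simp⟩
  have hbdd : BddBelow S := by
    refine ⟨0, fun r hr => ?_⟩
    obtain ⟨A, B, _, _, hpos, rfl⟩ := hr
    positivity
  have ha0 : 0 ≤ a := by
    rw [haS]
    refine le_csInf ⟨1, hmem1⟩ fun r hr => ?_
    obtain ⟨A, B, _, _, hpos, rfl⟩ := hr
    positivity
  have ha1 : a ≤ 1 := by rw [haS]; exact csInf_le hbdd hmem1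
  have hmix : ∀ A B : Set Ω, MeasurableSet[𝒢] A → MeasurableSet[ℬ] B →
      a * ((μ A).toReal * (μ B).toReal) ≤ (μ (A ∩ B)).toReal := by
    intro A B hA hB
    by_cases hp : 0 < (μ A).toReal * (μ B).toReal
    · have hmem : (μ (A ∩ B)).toReal / ((μ A).toReal * (μ B).toReal) ∈ S :=
        ⟨A, B, hA, hB, hp, rfl⟩
      have := haS ▸ csInf_le hbdd hmem
      rw [le_div_iff₀ hp] at this
      exact this
    · have h0 : (μ A).toReal * (μ B).toReal = 0 :=
        le_antisymm (not_lt.mp hp) (by positivity)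
      rw [h0, mul_zero]
      exact ENNReal.toReal_nonneg
  set s : ℝ := a * t + (1 - a) with hsdef
  have hs0 : 0 ≤ s := by nlinarith
  have hkey : ∀ A : Set Ω, MeasurableSet[𝒢] A → ‖∫ ω in A, f ω ∂μ‖ ≤ s * (μ A).toReal := by
    intro A hA
    have hAm : MeasurableSet[m] A := hmG _ hA
    by_cases hA0 : μ A = 0
    · rw [Measure.restrict_eq_zero.mpr hA0]
      simp [hA0]
    · set p : ℝ := (μ A).toReal with hp
      have hp0 : 0 < p := ENNReal.toReal_pos hA0 (measure_ne_top μ A)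
      have hap0 : 0 ≤ a * p := mul_nonneg ha0 hp0.le
      set Q : Measure Ω := (μ.restrict A).trim hmB with hQ
      set ν : Measure Ω := (ENNReal.ofReal (a * p)) • (μ.trim hmB) with hν
      haveI : IsFiniteMeasure (μ.trim hmB) := isFiniteMeasure_trim hmB
      haveI : IsFiniteMeasure Q := isFiniteMeasure_trim hmB
      haveI : IsFiniteMeasure ν := by
        constructor
        rw [hν, Measure.smul_apply, smul_eq_mul]
        exact ENNReal.mul_lt_top ENNReal.ofReal_lt_top (measure_lt_top _ _)
      have hle : ν ≤ Q := by
        rw [Measure.le_iff]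
        intro B hB
        rw [hν, hQ, Measure.smul_apply, smul_eq_mul, trim_measurableSet_eq hmB hB,
          trim_measurableSet_eq hmB hB, Measure.restrict_apply (hmB _ hB), Set.inter_comm]
        calc ENNReal.ofReal (a * p) * μ B
            = ENNReal.ofReal (a * p * (μ B).toReal) := by
              rw [ENNReal.ofReal_mul hap0, ENNReal.ofReal_toReal (measure_ne_top μ B)]
          _ ≤ ENNReal.ofReal ((μ (A ∩ B)).toReal) := by
              refine ENNReal.ofReal_le_ofReal ?_
              have := hmix A B hA hB
              calc a * p * (μ B).toReal = a * (p * (μ B).toReal) := by ring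
                _ ≤ (μ (A ∩ B)).toReal := this
          _ = μ (A ∩ B) := ENNReal.ofReal_toReal (measure_ne_top μ _)
      set κ : Measure Ω := Q - ν with hκ
      have hcancel : κ + ν = Q := Measure.sub_add_cancel_of_le hle
      haveI : IsFiniteMeasure κ := isFiniteMeasure_of_le Q Measure.sub_le
      have hintκ : Integrable f κ :=
        Integrable.mono' (integrable_const 1) hfB.aestronglyMeasurable
          (ae_of_all _ fun ω => (hfnorm ω).le)
      have hintν : Integrable f ν :=
        Integrable.mono' (integrable_const 1) hfB.aestronglyMeasurable
          (ae_of_all _ fun ω => (hfnorm ω).le)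
      have hQuniv : Q Set.univ = μ A := by
        rw [hQ, trim_measurableSet_eq hmB MeasurableSet.univ,
          Measure.restrict_apply MeasurableSet.univ, Set.univ_inter]
      have hνuniv : ν Set.univ = ENNReal.ofReal (a * p) := by
        rw [hν, Measure.smul_apply, smul_eq_mul, trim_measurableSet_eq hmB MeasurableSet.univ]
        simp
      have hκuniv : (κ Set.univ).toReal = p - a * p := by
        have hc := congrArg (fun ρ : Measure Ω => (ρ Set.univ).toReal) hcancel
        simp only [Measure.coe_add, Pi.add_apply] at hc
        rw [ENNReal.toReal_add (measure_ne_top κ _) (measure_ne_top ν _), hνuniv, hQuniv,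
          ENNReal.toReal_ofReal hap0] at hc
        rw [← hp] at hc
        linarith
      have hIQ : ∫ ω in A, f ω ∂μ = ∫ ω, f ω ∂Q := integral_trim hmB hfB
      have hIμ : φ = ∫ ω, f ω ∂(μ.trim hmB) := integral_trim hmB hfB
      have hsplit : ∫ ω, f ω ∂Q = (∫ ω, f ω ∂κ) + (a * p) • φ := by
        rw [← hcancel, integral_add_measure hintκ hintν, hν, integral_smul_measure,
          ENNReal.toReal_ofReal hap0, hIμ]
      have hκbound : ‖∫ ω, f ω ∂κ‖ ≤ p - a * p := by
        calc ‖∫ ω, f ω ∂κ‖ ≤ ∫ ω, ‖f ω‖ ∂κ := norm_integral_le_integral_norm f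
          _ = (κ Set.univ).toReal := by simp [hfnorm, Measure.real]
          _ = p - a * p := hκuniv
      calc ‖∫ ω in A, f ω ∂μ‖ = ‖(∫ ω, f ω ∂κ) + (a * p) • φ‖ := by rw [hIQ, hsplit]
        _ ≤ ‖∫ ω, f ω ∂κ‖ + ‖(a * p) • φ‖ := norm_add_le _ _
        _ = ‖∫ ω, f ω ∂κ‖ + (a * p) * t := by
            rw [norm_smul, Real.norm_eq_abs, _root_.abs_of_nonneg hap0]
        _ ≤ (p - a * p) + (a * p) * t := by
            have := mul_le_mul_of_nonneg_right (le_refl (a * p)) ht0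
            linarith [hκbound]
        _ = s * p := by rw [hsdef]; ring
  have hmain : ∀ᵐ ω ∂μ, ‖(μ[f|𝒢]) ω‖ ≤ s :=
    @ae_norm_condexp_le Ω m μ (by infer_instance) 𝒢 hmG f hfint s hkey
  filter_upwards [hmain] with ω hω
  have hn0 : 0 ≤ ‖(μ[f|𝒢]) ω‖ := norm_nonneg _
  have h2 : ‖(μ[f|𝒢]) ω‖ ^ 2 ≤ s ^ 2 := by nlinarith
  have h3 : s ^ 2 ≤ 1 - a ^ 2 * (1 - t ^ 2) := by
    have hfac : 0 ≤ a * (1 - a) * (1 - t) :=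
      mul_nonneg (mul_nonneg ha0 (by linarith)) (by linarith)
    rw [hsdef]; nlinarith
  linarith
end

section
/- Let (ξ_k)_{k≥1} be a Markov chain with transition probabilities Q_k(x,A) = P(ξ_k ∈ A | ξ_{k-1} = x) and marginals P_k, satisfying: there is a > 0 such that for all k ≥ 2 there is a set S'_k with P_{k-1}(S'_k) = 1 and Q_k(x,A) > a P_k(A) for all measurable A and x ∈ S'_k. Let X_j = g_j(ξ_j) for measurable functions g_j, S_n = X_1 + ... + X_n, and f_j(u) = E(exp(iuX_j)). Then for all n and all real u, |E(exp(iuS_n))| ≤ exp( -(a⁴/16) Σ_{j=1}^n (1 - |f_j(u)|²) ). -/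
open MeasureTheory Complex ProbabilityTheory Filter
open scoped ENNReal NNReal

namespace CharFunAux

noncomputable def Efun {𝓧 : Type*} (g : ℕ → 𝓧 → ℝ) (u : ℝ) (j : ℕ) (y : 𝓧) : ℂ :=
  Complex.exp (u * g j y * I)

noncomputable def hfun {𝓧 : Type*} [MeasurableSpace 𝓧] (Q : ℕ → Kernel 𝓧 𝓧)
    (g : ℕ → 𝓧 → ℝ) (u : ℝ) (n : ℕ) : ℕ → 𝓧 → ℂ
  | 0 => fun _ => 1
  | t+1 => fun x => ∫ y, Efun g u (n - t) y * hfun Q g u n t y ∂(Q (n - t) x)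

noncomputable def BC (a : ℝ) (F : ℕ → ℝ) (n : ℕ) : ℕ → ℝ × ℝ
  | 0 => (1, F n)
  | t+1 => (a * (BC a F n t).2 + (1-a) * (BC a F n t).1,
            a * F (n - t - 1) * (BC a F n t).2 + (1-a) * (BC a F n t).1)

variable {a : ℝ} {F : ℕ → ℝ} {n : ℕ}

lemma norm_Efun {𝓧 : Type*} (g : ℕ → 𝓧 → ℝ) (u : ℝ) (j : ℕ) (y : 𝓧) :
    ‖Efun g u j y‖ = 1 := by
  have : (u : ℂ) * (g j y : ℂ) * I = ((u * g j y : ℝ) : ℂ) * I := by push_cast; ring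
  rw [Efun, this]
  exact Complex.norm_exp_ofReal_mul_I _

lemma measurable_Efun {𝓧 : Type*} [MeasurableSpace 𝓧] {g : ℕ → 𝓧 → ℝ}
    (hg : ∀ j, Measurable (g j)) (u : ℝ) (j : ℕ) : Measurable (Efun g u j) := by
  apply Complex.measurable_exp.comp
  exact (measurable_const.mul (Complex.measurable_ofReal.comp (hg j))).mul measurable_const

lemma BC_bounds (ha : 0 < a) (ha1 : a ≤ 1) (hF0 : ∀ j, 0 ≤ F j) (hF1 : ∀ j, F j ≤ 1) :
    ∀ t, 0 ≤ (BC a F n t).2 ∧ (BC a F n t).2 ≤ (BC a F n t).1 ∧ (BC a F n t).1 ≤ 1 := by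
  intro t
  induction t with
  | zero => exact ⟨hF0 n, by simp [BC, hF1 n], le_refl _⟩
  | succ t ih =>
    obtain ⟨h1, h2, h3⟩ := ih
    have hF0' := hF0 (n - t - 1); have hF1' := hF1 (n - t - 1)
    have hB0 : 0 ≤ (BC a F n t).1 := le_trans h1 h2
    refine ⟨?_, ?_, ?_⟩ <;> simp only [BC] <;>
      nlinarith [mul_nonneg ha.le h1, mul_nonneg (mul_nonneg ha.le hF0') h1,
        mul_nonneg (mul_nonneg ha.le (sub_nonneg.mpr hF1')) h1,
        mul_nonneg (sub_nonneg.mpr ha1) hB0, mul_nonneg ha.le (sub_nonneg.mpr h2)]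

lemma BC_pair (ha : 0 < a) (ha1 : a ≤ 1) (hF0 : ∀ j, 0 ≤ F j) (hF1 : ∀ j, F j ≤ 1) (t : ℕ) :
    (BC a F n (t+2)).1 ≤ (1 - a^2 * (1 - F (n - t - 1))) * (BC a F n t).1 := by
  obtain ⟨h1, h2, h3⟩ := BC_bounds (n := n) ha ha1 hF0 hF1 t
  have hF0' := hF0 (n - t - 1); have hF1' := hF1 (n - t - 1)
  have : n - (t+1) - 1 = n - t - 2 := by omega
  simp only [BC]
  nlinarith [mul_nonneg (mul_nonneg ha.le (sub_nonneg.mpr ha1)) (sub_nonneg.mpr h2),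
    mul_nonneg (mul_nonneg (mul_nonneg ha.le ha.le) hF0') (sub_nonneg.mpr h2),
    mul_nonneg ha.le (sub_nonneg.mpr h2)]

lemma q_le_e (ha : 0 < a) (ha1 : a ≤ 1) (hF0 : 0 ≤ F n) (hF1 : F n ≤ 1) :
    1 - a^2 * (1 - F n) ≤ Real.exp (-(a^2/2) * (1 - F n ^ 2)) := by
  have h := Real.add_one_le_exp (-(a^2/2) * (1 - F n ^ 2))
  nlinarith [mul_nonneg (mul_nonneg (mul_nonneg ha.le ha.le) (sub_nonneg.mpr hF1)) (sub_nonneg.mpr hF1)]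

lemma BC_prod (ha : 0 < a) (ha1 : a ≤ 1) (hF0 : ∀ j, 0 ≤ F j) (hF1 : ∀ j, F j ≤ 1) :
    ∀ t, t ≤ n - 1 →
      (BC a F n t).1 * (BC a F n (t+1)).1 ≤
        ∏ j ∈ Finset.Icc (n - t) n, Real.exp (-(a^2/2) * (1 - F j ^ 2)) := by
  intro t
  induction t with
  | zero =>
    intro _
    have he := q_le_e (n := n) ha ha1 (hF0 n) (hF1 n)
    have h0 : (BC a F n 0).1 * (BC a F n 1).1 = a * F n + (1-a) := by
      show (1:ℝ) * (a * (F n) + (1-a) * 1) = _; ring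
    rw [h0]
    simp only [Nat.sub_zero, Finset.Icc_self, Finset.prod_singleton]
    nlinarith [hF0 n, hF1 n,
      mul_nonneg (mul_nonneg ha.le (sub_nonneg.mpr ha1)) (sub_nonneg.mpr (hF1 n))]
  | succ t ih =>
    intro hton
    have ht : t ≤ n - 1 := by omega
    have hstep := BC_pair (n := n) ha ha1 hF0 hF1 t
    obtain ⟨_, _, hB1⟩ := BC_bounds (n := n) ha ha1 hF0 hF1 (t+1)
    have hB1nn : 0 ≤ (BC a F n (t+1)).1 :=
      le_trans (BC_bounds (n := n) ha ha1 hF0 hF1 (t+1)).1 (BC_bounds (n := n) ha ha1 hF0 hF1 (t+1)).2.1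
    have hq : 0 ≤ 1 - a^2 * (1 - F (n - t - 1)) := by
      nlinarith [hF0 (n - t - 1), hF1 (n - t - 1)]
    have he := q_le_e (n := n - t - 1) ha ha1 (hF0 _) (hF1 _)
    -- product split
    have hsplit : Finset.Icc (n - (t+1)) n = insert (n - (t+1)) (Finset.Icc (n - t) n) := by
      have h1 : n - t = (n - (t+1)) + 1 := by omega
      rw [h1, ← Finset.Ioc_insert_left (by omega : n - (t+1) ≤ n), Finset.Icc_add_one_left_eq_Ioc]
    have hnotmem : (n - (t+1)) ∉ Finset.Icc (n - t) n := by
      simp only [Finset.mem_Icc]; omega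
    rw [hsplit, Finset.prod_insert hnotmem]
    have hidx : n - (t+1) = n - t - 1 := by omega
    calc (BC a F n (t+1)).1 * (BC a F n (t+2)).1
        ≤ (BC a F n (t+1)).1 * ((1 - a^2 * (1 - F (n - t - 1))) * (BC a F n t).1) := by
          exact mul_le_mul_of_nonneg_left hstep hB1nn
      _ = (1 - a^2 * (1 - F (n - t - 1))) * ((BC a F n t).1 * (BC a F n (t+1)).1) := by ring
      _ ≤ Real.exp (-(a^2/2) * (1 - F (n - t - 1) ^ 2)) *
            ∏ j ∈ Finset.Icc (n - t) n, Real.exp (-(a^2/2) * (1 - F j ^ 2)) := by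
          apply mul_le_mul he (ih ht) ?_ (Real.exp_nonneg _)
          exact mul_nonneg (le_trans (BC_bounds (n := n) ha ha1 hF0 hF1 t).1 (BC_bounds (n := n) ha ha1 hF0 hF1 t).2.1) hB1nn
      _ = Real.exp (-(a^2/2) * (1 - F (n - (t+1)) ^ 2)) *
            ∏ j ∈ Finset.Icc (n - t) n, Real.exp (-(a^2/2) * (1 - F j ^ 2)) := by rw [hidx]


namespace CharFunAux2

variable {Ω 𝓧 : Type*} [MeasurableSpace Ω] [MeasurableSpace 𝓧]
  {μ : Measure Ω} [IsProbabilityMeasure μ] {ξ : ℕ → Ω → 𝓧} {Q : ℕ → Kernel 𝓧 𝓧}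

lemma integrable_of_bound {α E : Type*} [MeasurableSpace α] [NormedAddCommGroup E]
    {m : Measure α} [IsFiniteMeasure m] {f : α → E}
    (hf : AEStronglyMeasurable f m) (C : ℝ) (h : ∀ x, ‖f x‖ ≤ C) : Integrable f m :=
  Integrable.mono' (integrable_const C) hf (Filter.Eventually.of_forall h)

lemma kernel_int_sm (κ : Kernel 𝓧 𝓧) [IsSFiniteKernel κ] {φ : 𝓧 → ℂ}
    (hφ : StronglyMeasurable φ) : StronglyMeasurable fun x => ∫ y, φ y ∂(κ x) :=
  StronglyMeasurable.integral_kernel_prod_right (hφ.comp_measurable measurable_snd)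

lemma map_eq_bind (hξ : ∀ k, Measurable (ξ k)) (hQ : ∀ k, IsMarkovKernel (Q k))
    (hMarkov : ∀ k : ℕ, 1 ≤ k → ∀ A : Set 𝓧, MeasurableSet A →
      (μ[fun ω => Set.indicator A (fun _ => (1 : ℝ)) (ξ k ω) |
          ⨆ i : Fin k, MeasurableSpace.comap (ξ i) inferInstance])
        =ᵐ[μ] fun ω => ((Q k) (ξ (k - 1) ω) A).toReal)
    (k : ℕ) (hk : 1 ≤ k) : μ.map (ξ k) = (μ.map (ξ (k-1))).bind (Q k) := by
  haveI := hQ k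
  ext A hA
  have hle : (⨆ i : Fin k, MeasurableSpace.comap (ξ i) inferInstance)
      ≤ (inferInstance : MeasurableSpace Ω) := iSup_le fun i => (hξ i).comap_le
  have hQmeas : Measurable fun x => Q k x A := Kernel.measurable_coe (Q k) hA
  have h1 : ∫ ω, Set.indicator A (fun _ => (1:ℝ)) (ξ k ω) ∂μ = (μ.map (ξ k) A).toReal := by
    have heq : ∀ ω, Set.indicator A (fun _ => (1:ℝ)) (ξ k ω)
        = Set.indicator (ξ k ⁻¹' A) (fun _ => (1:ℝ)) ω := fun ω => by
      by_cases h : ξ k ω ∈ A <;> simp [h, Set.indicator_of_mem, Set.indicator_of_notMem]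
    simp_rw [heq]
    rw [integral_indicator_const (1:ℝ) ((hξ k) hA), Measure.map_apply (hξ k) hA,
      smul_eq_mul, mul_one, measureReal_def]
  have h2 : ∫ ω, Set.indicator A (fun _ => (1:ℝ)) (ξ k ω) ∂μ
      = ∫ ω, ((Q k) (ξ (k-1) ω) A).toReal ∂μ := by
    have := integral_congr_ae (hMarkov k hk A hA)
    rwa [integral_condExp hle] at this
  have h3 : ∫ ω, ((Q k) (ξ (k-1) ω) A).toReal ∂μ
      = (∫⁻ ω, (Q k) (ξ (k-1) ω) A ∂μ).toReal := by
    exact integral_toReal ((hQmeas.comp (hξ (k-1))).aemeasurable)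
      (Filter.Eventually.of_forall fun ω => lt_of_le_of_lt prob_le_one ENNReal.one_lt_top)
  have h4 : (μ.map (ξ (k-1))).bind (Q k) A = ∫⁻ ω, (Q k) (ξ (k-1) ω) A ∂μ := by
    rw [Measure.bind_apply hA (Q k).measurable.aemeasurable, lintegral_map hQmeas (hξ (k-1))]
  have hfin2 : (∫⁻ ω, (Q k) (ξ (k-1) ω) A ∂μ) ≠ ⊤ := by
    have hle1 : ∫⁻ ω, (Q k) (ξ (k-1) ω) A ∂μ ≤ ∫⁻ _, 1 ∂μ :=
      lintegral_mono fun ω => prob_le_one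
    simp only [lintegral_one, measure_univ, mul_one] at hle1
    exact ne_top_of_le_ne_top ENNReal.one_ne_top hle1
  rw [h4]
  refine (ENNReal.toReal_eq_toReal_iff' (measure_ne_top _ _) hfin2).mp ?_
  rw [← h1, h2, h3]

lemma null_transfer (hξ : ∀ k, Measurable (ξ k)) (hQ : ∀ k, IsMarkovKernel (Q k))
    (hMarkov : ∀ k : ℕ, 1 ≤ k → ∀ A : Set 𝓧, MeasurableSet A →
      (μ[fun ω => Set.indicator A (fun _ => (1 : ℝ)) (ξ k ω) |
          ⨆ i : Fin k, MeasurableSpace.comap (ξ i) inferInstance])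
        =ᵐ[μ] fun ω => ((Q k) (ξ (k - 1) ω) A).toReal)
    (k : ℕ) (hk : 1 ≤ k) {N : Set 𝓧} (hN : MeasurableSet N)
    (h0 : μ.map (ξ k) N = 0) : ∀ᵐ x ∂(μ.map (ξ (k-1))), Q k x N = 0 := by
  rw [map_eq_bind hξ hQ hMarkov k hk, Measure.bind_apply hN (Q k).measurable.aemeasurable] at h0
  have := (lintegral_eq_zero_iff (Kernel.measurable_coe (Q k) hN)).mp h0
  filter_upwards [this] with x hx
  simpa using hx

lemma a_le_one (hξ : ∀ k, Measurable (ξ k)) (hQ : ∀ k, IsMarkovKernel (Q k)) {a : ℝ}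
    (ha : 0 < a)
    (hmix : ∀ k : ℕ, 2 ≤ k → ∃ S' : Set 𝓧, MeasurableSet S' ∧
      μ.map (ξ (k - 1)) S'ᶜ = 0 ∧
      ∀ x ∈ S', ∀ A : Set 𝓧, MeasurableSet A →
        ENNReal.ofReal a * (μ.map (ξ k)) A ≤ (Q k) x A) : a ≤ 1 := by
  haveI := hQ 2
  obtain ⟨S', hSm, hSnull, hSbd⟩ := hmix 2 le_rfl
  haveI : IsProbabilityMeasure (μ.map (ξ 1)) := Measure.isProbabilityMeasure_map (hξ 1).aemeasurable
  haveI : IsProbabilityMeasure (μ.map (ξ 2)) := Measure.isProbabilityMeasure_map (hξ 2).aemeasurable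
  obtain ⟨x, hx⟩ : S'.Nonempty := by
    by_contra h
    rw [Set.not_nonempty_iff_eq_empty] at h
    rw [h, Set.compl_empty] at hSnull
    simp [measure_univ] at hSnull
  have := hSbd x hx Set.univ MeasurableSet.univ
  rw [measure_univ, measure_univ, mul_one] at this
  by_contra h
  push_neg at h
  have h2 : (1:ℝ≥0∞) < ENNReal.ofReal a := by
    rw [show (1:ℝ≥0∞) = ENNReal.ofReal 1 by simp]
    exact (ENNReal.ofReal_lt_ofReal_iff ha).mpr h
  exact absurd this (not_le.mpr h2)

lemma dec (hξ : ∀ k, Measurable (ξ k)) (hQ : ∀ k, IsMarkovKernel (Q k))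
    (hMarkov : ∀ k : ℕ, 1 ≤ k → ∀ A : Set 𝓧, MeasurableSet A →
      (μ[fun ω => Set.indicator A (fun _ => (1 : ℝ)) (ξ k ω) |
          ⨆ i : Fin k, MeasurableSpace.comap (ξ i) inferInstance])
        =ᵐ[μ] fun ω => ((Q k) (ξ (k - 1) ω) A).toReal)
    {a : ℝ} (ha : 0 < a) (ha1 : a ≤ 1)
    (hmix : ∀ k : ℕ, 2 ≤ k → ∃ S' : Set 𝓧, MeasurableSet S' ∧
      μ.map (ξ (k - 1)) S'ᶜ = 0 ∧
      ∀ x ∈ S', ∀ A : Set 𝓧, MeasurableSet A →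
        ENNReal.ofReal a * (μ.map (ξ k)) A ≤ (Q k) x A)
    (k : ℕ) (hk : 2 ≤ k) {w : 𝓧 → ℂ} (hw : Measurable w) (hw1 : ∀ y, ‖w y‖ ≤ 1)
    {β : ℝ} (hβ0 : 0 ≤ β) (hβ : ∀ᵐ y ∂(μ.map (ξ k)), ‖w y‖ ≤ β) :
    ∀ᵐ x ∂(μ.map (ξ (k-1))),
      ‖(∫ y, w y ∂(Q k x)) - (a:ℂ) * ∫ y, w y ∂(μ.map (ξ k))‖ ≤ (1-a) * β := by
  haveI := hQ k
  obtain ⟨S', hSm, hSnull, hSbd⟩ := hmix k hk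
  haveI : IsProbabilityMeasure (μ.map (ξ k)) := Measure.isProbabilityMeasure_map (hξ k).aemeasurable
  set N : Set 𝓧 := {y | β < ‖w y‖} with hNdef
  have hN : MeasurableSet N := measurableSet_lt measurable_const hw.norm
  have hN0 : μ.map (ξ k) N = 0 := by
    have := ae_iff.mp hβ
    simpa [hNdef, not_le] using this
  have hQN := null_transfer hξ hQ hMarkov k (by omega) hN hN0
  have hS'ae : ∀ᵐ x ∂(μ.map (ξ (k-1))), x ∈ S' := by
    rw [ae_iff]
    exact hSnull
  filter_upwards [hQN, hS'ae] with x hxN hxS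
  have hlem : (ENNReal.ofReal a) • (μ.map (ξ k)) ≤ Q k x := by
    refine Measure.le_iff.mpr fun s hs => ?_
    rw [Measure.smul_apply, smul_eq_mul]
    exact hSbd x hxS s hs
  haveI : IsFiniteMeasure ((ENNReal.ofReal a) • (μ.map (ξ k))) := by
    constructor
    rw [Measure.smul_apply, smul_eq_mul, measure_univ, mul_one]
    exact ENNReal.ofReal_lt_top
  set ν : Measure 𝓧 := Q k x - (ENNReal.ofReal a) • (μ.map (ξ k)) with hνdef
  have hsum : ν + (ENNReal.ofReal a) • (μ.map (ξ k)) = Q k x :=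
    Measure.sub_add_cancel_of_le hlem
  have hνle : ν ≤ Q k x := Measure.sub_le
  haveI : IsFiniteMeasure ν := isFiniteMeasure_of_le _ hνle
  have hsplit : ∫ y, w y ∂(Q k x)
      = ∫ y, w y ∂ν + ∫ y, w y ∂((ENNReal.ofReal a) • (μ.map (ξ k))) := by
    rw [← hsum]
    exact integral_add_measure
      (integrable_of_bound hw.aestronglyMeasurable 1 hw1)
      (integrable_of_bound hw.aestronglyMeasurable 1 hw1)
  have hsmul : ∫ y, w y ∂((ENNReal.ofReal a) • (μ.map (ξ k)))
      = (a:ℂ) * ∫ y, w y ∂(μ.map (ξ k)) := by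
    rw [integral_smul_measure, ENNReal.toReal_ofReal ha.le, ← Complex.real_smul]
  have heq : (∫ y, w y ∂(Q k x)) - (a:ℂ) * ∫ y, w y ∂(μ.map (ξ k)) = ∫ y, w y ∂ν := by
    rw [hsplit, hsmul]; ring
  rw [heq]
  have hνN : ν N = 0 := le_antisymm (le_trans (Measure.le_iff'.mp hνle N) (le_of_eq hxN)) zero_le
  have hνbd : ∀ᵐ y ∂ν, ‖w y‖ ≤ β := by
    rw [ae_iff]
    have : {y | ¬ ‖w y‖ ≤ β} = N := by ext y; simp [hNdef, not_le]
    rw [this]; exact hνN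
  have hb := norm_integral_le_of_norm_le_const (μ := ν) hνbd
  have hνuniv : (ν Set.univ).toReal = 1 - a := by
    rw [hνdef, Measure.sub_apply MeasurableSet.univ hlem, measure_univ, Measure.smul_apply,
      smul_eq_mul, measure_univ, mul_one,
      ENNReal.toReal_sub_of_le (ENNReal.ofReal_le_one.mpr ha1) ENNReal.one_ne_top]
    simp [ENNReal.toReal_ofReal ha.le]
  rw [measureReal_def, hνuniv] at hb
  calc ‖∫ y, w y ∂ν‖ ≤ β * (1 - a) := hb
    _ = (1-a) * β := by ring

lemma pull_real (hξ : ∀ k, Measurable (ξ k)) (hQ : ∀ k, IsMarkovKernel (Q k))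
    (hMarkov : ∀ k : ℕ, 1 ≤ k → ∀ A : Set 𝓧, MeasurableSet A →
      (μ[fun ω => Set.indicator A (fun _ => (1 : ℝ)) (ξ k ω) |
          ⨆ i : Fin k, MeasurableSpace.comap (ξ i) inferInstance])
        =ᵐ[μ] fun ω => ((Q k) (ξ (k - 1) ω) A).toReal)
    (k : ℕ) (hk : 1 ≤ k) {ψ : Ω → ℝ}
    (hψ : StronglyMeasurable[⨆ i : Fin k, MeasurableSpace.comap (ξ i) inferInstance] ψ)
    (hψb : ∀ ω, ‖ψ ω‖ ≤ 1) {A : Set 𝓧} (hA : MeasurableSet A) :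
    ∫ ω, ψ ω * Set.indicator A (fun _ => (1:ℝ)) (ξ k ω) ∂μ
      = ∫ ω, ψ ω * ((Q k) (ξ (k-1) ω) A).toReal ∂μ := by
  haveI := hQ k
  have hle : (⨆ i : Fin k, MeasurableSpace.comap (ξ i) inferInstance)
      ≤ (inferInstance : MeasurableSpace Ω) := iSup_le fun i => (hξ i).comap_le
  set Z : Ω → ℝ := fun ω => Set.indicator A (fun _ => (1:ℝ)) (ξ k ω) with hZdef
  have hZmeas : Measurable Z := (measurable_const.indicator hA).comp (hξ k)
  have hZint : Integrable Z μ := by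
    refine integrable_of_bound hZmeas.aestronglyMeasurable 1 fun ω => ?_
    rw [hZdef]
    by_cases h : ξ k ω ∈ A <;>
      simp [h, Set.indicator_of_mem, Set.indicator_of_notMem]
  have hpull : μ[ψ * Z|⨆ i : Fin k, MeasurableSpace.comap (ξ i) inferInstance]
      =ᵐ[μ] ψ * μ[Z|⨆ i : Fin k, MeasurableSpace.comap (ξ i) inferInstance] :=
    condExp_stronglyMeasurable_mul_of_bound hle hψ hZint 1 (Filter.Eventually.of_forall hψb)
  have hmk := hMarkov k hk A hA
  calc ∫ ω, ψ ω * Z ω ∂μ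
      = ∫ ω, (μ[ψ * Z|⨆ i : Fin k, MeasurableSpace.comap (ξ i) inferInstance]) ω ∂μ := by
        rw [integral_condExp hle]; rfl
    _ = ∫ ω, ψ ω * (μ[Z|⨆ i : Fin k, MeasurableSpace.comap (ξ i) inferInstance]) ω ∂μ := by
        refine integral_congr_ae (hpull.mono fun ω hω => ?_)
        simpa using hω
    _ = ∫ ω, ψ ω * ((Q k) (ξ (k-1) ω) A).toReal ∂μ := by
        refine integral_congr_ae (hmk.mono fun ω hω => ?_)
        simp only at hω ⊢
        rw [hω]

lemma pull_complex (hξ : ∀ k, Measurable (ξ k)) (hQ : ∀ k, IsMarkovKernel (Q k))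
    (hMarkov : ∀ k : ℕ, 1 ≤ k → ∀ A : Set 𝓧, MeasurableSet A →
      (μ[fun ω => Set.indicator A (fun _ => (1 : ℝ)) (ξ k ω) |
          ⨆ i : Fin k, MeasurableSpace.comap (ξ i) inferInstance])
        =ᵐ[μ] fun ω => ((Q k) (ξ (k - 1) ω) A).toReal)
    (k : ℕ) (hk : 1 ≤ k) {Ψ : Ω → ℂ}
    (hΨ : Measurable[⨆ i : Fin k, MeasurableSpace.comap (ξ i) inferInstance] Ψ)
    (hΨb : ∀ ω, ‖Ψ ω‖ ≤ 1) {A : Set 𝓧} (hA : MeasurableSet A) :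
    ∫ ω, Ψ ω * ((Set.indicator A (fun _ => (1:ℝ)) (ξ k ω) : ℝ) : ℂ) ∂μ
      = ∫ ω, Ψ ω * (((Q k) (ξ (k-1) ω) A).toReal : ℂ) ∂μ := by
  haveI := hQ k
  have hle : (⨆ i : Fin k, MeasurableSpace.comap (ξ i) inferInstance)
      ≤ (inferInstance : MeasurableSpace Ω) := iSup_le fun i => (hξ i).comap_le
  have hΨ0 : Measurable Ψ := hΨ.mono hle le_rfl
  have hre : StronglyMeasurable[⨆ i : Fin k, MeasurableSpace.comap (ξ i) inferInstance]
      fun ω => (Ψ ω).re := (Complex.measurable_re.comp hΨ).stronglyMeasurable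
  have him : StronglyMeasurable[⨆ i : Fin k, MeasurableSpace.comap (ξ i) inferInstance]
      fun ω => (Ψ ω).im := (Complex.measurable_im.comp hΨ).stronglyMeasurable
  have hreb : ∀ ω, ‖(Ψ ω).re‖ ≤ 1 := fun ω =>
    le_trans (Complex.abs_re_le_norm _) (hΨb ω)
  have himb : ∀ ω, ‖(Ψ ω).im‖ ≤ 1 := fun ω =>
    le_trans (Complex.abs_im_le_norm _) (hΨb ω)
  have key : ∀ (c : Ω → ℝ), Measurable c → (∀ ω, ‖c ω‖ ≤ 1) →
      ∫ ω, Ψ ω * (c ω : ℂ) ∂μ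
        = ((∫ ω, (Ψ ω).re * c ω ∂μ : ℝ) : ℂ) + ((∫ ω, (Ψ ω).im * c ω ∂μ : ℝ) : ℂ) * I := by
    intro c hc hcb
    have h1 : Integrable (fun ω => (Ψ ω).re * c ω) μ := by
      refine integrable_of_bound ((Complex.measurable_re.comp hΨ0).mul hc).aestronglyMeasurable 1
        fun ω => ?_
      rw [norm_mul]
      exact mul_le_one₀ (hreb ω) (norm_nonneg _) (hcb ω)
    have h2 : Integrable (fun ω => (Ψ ω).im * c ω) μ := by
      refine integrable_of_bound ((Complex.measurable_im.comp hΨ0).mul hc).aestronglyMeasurable 1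
        fun ω => ?_
      rw [norm_mul]
      exact mul_le_one₀ (himb ω) (norm_nonneg _) (hcb ω)
    have hptw : ∀ ω, Ψ ω * (c ω : ℂ)
        = (((Ψ ω).re * c ω : ℝ) : ℂ) + ((Ψ ω).im * c ω) • I := by
      intro ω
      rw [real_smul]
      simp only [Complex.ext_iff, Complex.add_re, Complex.add_im, Complex.ofReal_re,
        Complex.ofReal_im, Complex.mul_re, Complex.mul_im, Complex.I_re, Complex.I_im]
      constructor <;> ring
    simp_rw [hptw]
    have ia : Integrable (fun ω => (((Ψ ω).re * c ω : ℝ) : ℂ)) μ := h1.ofReal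
    have ib : Integrable (fun ω => ((Ψ ω).im * c ω) • I) μ := h2.smul_const I
    have hofReal : ∫ ω, (((Ψ ω).re * c ω : ℝ) : ℂ) ∂μ
        = ((∫ ω, (Ψ ω).re * c ω ∂μ : ℝ) : ℂ) := by
      have := Complex.ofRealCLM.integral_comp_comm h1
      simpa using this
    rw [integral_add ia ib, hofReal, integral_smul_const, real_smul]
  have hZb : ∀ ω, ‖Set.indicator A (fun _ => (1:ℝ)) (ξ k ω)‖ ≤ 1 := fun ω => by
    by_cases h : ξ k ω ∈ A <;>
      simp [h, Set.indicator_of_mem, Set.indicator_of_notMem]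
  have hWb : ∀ ω, ‖((Q k) (ξ (k-1) ω) A).toReal‖ ≤ 1 := fun ω => by
    rw [Real.norm_eq_abs, _root_.abs_of_nonneg ENNReal.toReal_nonneg]
    exact ENNReal.toReal_le_of_le_ofReal zero_le_one (by simpa using prob_le_one)
  rw [key (fun ω => Set.indicator A (fun _ => (1:ℝ)) (ξ k ω))
      ((measurable_const.indicator hA).comp (hξ k)) hZb,
    key (fun ω => ((Q k) (ξ (k-1) ω) A).toReal)
      ((Kernel.measurable_coe (Q k) hA).comp (hξ (k-1))).ennreal_toReal hWb,
    pull_real hξ hQ hMarkov k hk hre hreb hA, pull_real hξ hQ hMarkov k hk him himb hA]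

lemma step (hξ : ∀ k, Measurable (ξ k)) (hQ : ∀ k, IsMarkovKernel (Q k))
    (hMarkov : ∀ k : ℕ, 1 ≤ k → ∀ A : Set 𝓧, MeasurableSet A →
      (μ[fun ω => Set.indicator A (fun _ => (1 : ℝ)) (ξ k ω) |
          ⨆ i : Fin k, MeasurableSpace.comap (ξ i) inferInstance])
        =ᵐ[μ] fun ω => ((Q k) (ξ (k - 1) ω) A).toReal)
    (k : ℕ) (hk : 1 ≤ k) {Ψ : Ω → ℂ}
    (hΨ : Measurable[⨆ i : Fin k, MeasurableSpace.comap (ξ i) inferInstance] Ψ)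
    (hΨb : ∀ ω, ‖Ψ ω‖ ≤ 1) {φ : 𝓧 → ℂ} (hφ : Measurable φ) (hφb : ∀ y, ‖φ y‖ ≤ 1) :
    ∫ ω, Ψ ω * φ (ξ k ω) ∂μ = ∫ ω, Ψ ω * ∫ y, φ y ∂((Q k) (ξ (k-1) ω)) ∂μ := by
  haveI := hQ k
  have hle : (⨆ i : Fin k, MeasurableSpace.comap (ξ i) inferInstance)
      ≤ (inferInstance : MeasurableSpace Ω) := iSup_le fun i => (hξ i).comap_le
  have hΨ0 : Measurable Ψ := hΨ.mono hle le_rfl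
  have hinner_norm : ∀ (φ' : 𝓧 → ℂ) (C : ℝ), (∀ y, ‖φ' y‖ ≤ C) → ∀ x : 𝓧,
      ‖∫ y, φ' y ∂((Q k) x)‖ ≤ C := by
    intro φ' C hb x
    have h := norm_integral_le_of_norm_le_const (μ := (Q k) x)
      (Filter.Eventually.of_forall hb)
    rwa [probReal_univ, mul_one] at h
  have h_outer_int : ∀ (φ' : 𝓧 → ℂ) (C : ℝ), StronglyMeasurable φ' → (∀ y, ‖φ' y‖ ≤ C) →
      Integrable (fun ω => Ψ ω * ∫ y, φ' y ∂((Q k) (ξ (k-1) ω))) μ := by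
    intro φ' C hm hb
    refine integrable_of_bound ((hΨ0.mul (((kernel_int_sm (Q k) hm).comp_measurable
      (hξ (k-1))).measurable))).aestronglyMeasurable C fun ω => ?_
    rw [norm_mul]
    have h1 := hinner_norm φ' C hb (ξ (k-1) ω)
    have h2 := hΨb ω
    have h3 : (0:ℝ) ≤ ‖∫ y, φ' y ∂((Q k) (ξ (k-1) ω))‖ := norm_nonneg _
    nlinarith
  have hL_int : ∀ (φ' : 𝓧 → ℂ) (C : ℝ), Measurable φ' → (∀ y, ‖φ' y‖ ≤ C) →
      Integrable (fun ω => Ψ ω * φ' (ξ k ω)) μ := by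
    intro φ' C hm hb
    refine integrable_of_bound (hΨ0.mul (hm.comp (hξ k))).aestronglyMeasurable C fun ω => ?_
    rw [norm_mul]
    have h1 := hb (ξ k ω)
    have h2 := hΨb ω
    have h3 : (0:ℝ) ≤ ‖φ' (ξ k ω)‖ := norm_nonneg _
    nlinarith
  -- simple function case
  have hsimple : ∀ s : SimpleFunc 𝓧 ℂ, ∫ ω, Ψ ω * s (ξ k ω) ∂μ
      = ∫ ω, Ψ ω * ∫ y, s y ∂((Q k) (ξ (k-1) ω)) ∂μ := by
    intro s
    induction s using SimpleFunc.induction with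
    | @const c sSet hs =>
      have hind : ∀ y : 𝓧,
          (SimpleFunc.piecewise sSet hs (SimpleFunc.const 𝓧 c) (SimpleFunc.const 𝓧 0)) y
          = ((Set.indicator sSet (fun _ => (1:ℝ)) y : ℝ) : ℂ) * c := fun y => by
        by_cases h : y ∈ sSet <;> simp [SimpleFunc.piecewise_apply, h]
      simp_rw [hind]
      have hconst : ∀ x : 𝓧,
          ∫ y, ((Set.indicator sSet (fun _ => (1:ℝ)) y : ℝ) : ℂ) * c ∂((Q k) x)
          = ((((Q k) x) sSet).toReal : ℂ) * c := fun x => by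
        have heq : ∀ y, ((Set.indicator sSet (fun _ => (1:ℝ)) y : ℝ) : ℂ) * c
            = Set.indicator sSet (fun _ => c) y := fun y => by
          by_cases h : y ∈ sSet <;> simp [h]
        simp_rw [heq]
        rw [integral_indicator_const c hs, real_smul, measureReal_def]
      simp_rw [hconst, ← mul_assoc]
      rw [integral_mul_const, integral_mul_const]
      congr 1
      exact pull_complex hξ hQ hMarkov k hk hΨ hΨb hs
    | @add f g _ ihf ihg =>
      obtain ⟨Cf, hCf⟩ := f.exists_forall_norm_le
      obtain ⟨Cg, hCg⟩ := g.exists_forall_norm_le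
      have hint_inner : ∀ (φ' : 𝓧 → ℂ) (C : ℝ), Measurable φ' → (∀ y, ‖φ' y‖ ≤ C) →
          ∀ x : 𝓧, Integrable φ' ((Q k) x) := fun φ' C hm hb x =>
        integrable_of_bound hm.aestronglyMeasurable C hb
      have hcoe : ∀ y, (⇑(f + g)) y = f y + g y := fun y => by
        rw [SimpleFunc.coe_add]; rfl
      calc ∫ ω, Ψ ω * (f + g) (ξ k ω) ∂μ
          = ∫ ω, (Ψ ω * f (ξ k ω) + Ψ ω * g (ξ k ω)) ∂μ := by
            congr 1; funext ω; rw [hcoe]; ring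
        _ = ∫ ω, Ψ ω * f (ξ k ω) ∂μ + ∫ ω, Ψ ω * g (ξ k ω) ∂μ :=
            integral_add (hL_int _ Cf f.measurable hCf) (hL_int _ Cg g.measurable hCg)
        _ = ∫ ω, Ψ ω * ∫ y, f y ∂((Q k) (ξ (k-1) ω)) ∂μ
            + ∫ ω, Ψ ω * ∫ y, g y ∂((Q k) (ξ (k-1) ω)) ∂μ := by rw [ihf, ihg]
        _ = ∫ ω, (Ψ ω * ∫ y, f y ∂((Q k) (ξ (k-1) ω))
            + Ψ ω * ∫ y, g y ∂((Q k) (ξ (k-1) ω))) ∂μ :=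
            (integral_add (h_outer_int _ Cf f.stronglyMeasurable hCf)
              (h_outer_int _ Cg g.stronglyMeasurable hCg)).symm
        _ = ∫ ω, Ψ ω * ∫ y, (f + g) y ∂((Q k) (ξ (k-1) ω)) ∂μ := by
            congr 1; funext ω
            rw [← mul_add]
            congr 1
            rw [← integral_add (hint_inner _ Cf f.measurable hCf _)
              (hint_inner _ Cg g.measurable hCg _)]
            exact integral_congr_ae (Filter.Eventually.of_forall fun y => (hcoe y).symm)
  -- approximation
  have hφsm : StronglyMeasurable φ := hφ.stronglyMeasurable
  set s : ℕ → SimpleFunc 𝓧 ℂ := hφsm.approxBounded 1 with hsdef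
  have htend : ∀ y, Tendsto (fun m => s m y) atTop (nhds (φ y)) := fun y =>
    hφsm.tendsto_approxBounded_of_norm_le (hφb y)
  have hsbd : ∀ m y, ‖s m y‖ ≤ 1 := fun m y => hφsm.norm_approxBounded_le zero_le_one m y
  have hL : Tendsto (fun m => ∫ ω, Ψ ω * s m (ξ k ω) ∂μ) atTop
      (nhds (∫ ω, Ψ ω * φ (ξ k ω) ∂μ)) := by
    refine tendsto_integral_of_dominated_convergence (fun _ => (1:ℝ))
      (fun m => (hΨ0.mul ((s m).measurable.comp (hξ k))).aestronglyMeasurable)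
      (integrable_const 1) (fun m => Filter.Eventually.of_forall fun ω => ?_)
      (Filter.Eventually.of_forall fun ω => (htend (ξ k ω)).const_mul _)
    rw [norm_mul]
    show ‖Ψ ω‖ * ‖(s m) (ξ k ω)‖ ≤ (1:ℝ)
    have h1 := hsbd m (ξ k ω)
    have h2 := hΨb ω
    have h3 : (0:ℝ) ≤ ‖s m (ξ k ω)‖ := norm_nonneg _
    nlinarith
  have hinner : ∀ x, Tendsto (fun m => ∫ y, s m y ∂((Q k) x)) atTop
      (nhds (∫ y, φ y ∂((Q k) x))) := fun x =>
    tendsto_integral_of_dominated_convergence (fun _ => (1:ℝ))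
      (fun m => (s m).measurable.aestronglyMeasurable) (integrable_const 1)
      (fun m => Filter.Eventually.of_forall fun y => hsbd m y)
      (Filter.Eventually.of_forall fun y => htend y)
  have hR : Tendsto (fun m => ∫ ω, Ψ ω * ∫ y, s m y ∂((Q k) (ξ (k-1) ω)) ∂μ) atTop
      (nhds (∫ ω, Ψ ω * ∫ y, φ y ∂((Q k) (ξ (k-1) ω)) ∂μ)) := by
    refine tendsto_integral_of_dominated_convergence (fun _ => (1:ℝ))
      (fun m => (hΨ0.mul (((kernel_int_sm (Q k) (s m).stronglyMeasurable).comp_measurable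
        (hξ (k-1))).measurable)).aestronglyMeasurable)
      (integrable_const 1) (fun m => Filter.Eventually.of_forall fun ω => ?_)
      (Filter.Eventually.of_forall fun ω => (hinner (ξ (k-1) ω)).const_mul _)
    rw [norm_mul]
    show ‖Ψ ω‖ * ‖∫ y, (s m) y ∂((Q k) (ξ (k-1) ω))‖ ≤ (1:ℝ)
    have h1 := hinner_norm (fun y => s m y) 1 (hsbd m) (ξ (k-1) ω)
    have h2 := hΨb ω
    have h3 : (0:ℝ) ≤ ‖∫ y, s m y ∂((Q k) (ξ (k-1) ω))‖ := norm_nonneg _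
    nlinarith
  have hfun : (fun m => ∫ ω, Ψ ω * s m (ξ k ω) ∂μ)
      = fun m => ∫ ω, Ψ ω * ∫ y, s m y ∂((Q k) (ξ (k-1) ω)) ∂μ := funext fun m => hsimple (s m)
  rw [hfun] at hL
  exact tendsto_nhds_unique hL hR

end CharFunAux2

end CharFunAux

open CharFunAux

set_option maxHeartbeats 1000000 in
/-- Proposition 6 of the paper: for an additive functional `S_n = Σ g_j(ξ_j)` of a
Markov chain satisfying the one-sided lower psi-mixing condition
`Q_k(x,·) ≥ a P_k(·)` a.s., the characteristic function of `S_n` satisfies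
`|E exp(iuS_n)| ≤ exp(-(a⁴/16) Σ_{j=1}^n (1 - |f_j(u)|²))`. -/
theorem charFun_sum_bound {Ω 𝓧 : Type*} [MeasurableSpace Ω] [MeasurableSpace 𝓧]
    (μ : Measure Ω) [IsProbabilityMeasure μ]
    (ξ : ℕ → Ω → 𝓧) (hξ : ∀ k, Measurable (ξ k))
    (Q : ℕ → Kernel 𝓧 𝓧) (hQ : ∀ k, IsMarkovKernel (Q k))
    (hMarkov : ∀ k : ℕ, 1 ≤ k → ∀ A : Set 𝓧, MeasurableSet A →
      (μ[fun ω => Set.indicator A (fun _ => (1 : ℝ)) (ξ k ω) |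
          ⨆ i : Fin k, MeasurableSpace.comap (ξ i) inferInstance])
        =ᵐ[μ] fun ω => ((Q k) (ξ (k - 1) ω) A).toReal)
    (a : ℝ) (ha : 0 < a)
    (hmix : ∀ k : ℕ, 2 ≤ k → ∃ S' : Set 𝓧, MeasurableSet S' ∧
      μ.map (ξ (k - 1)) S'ᶜ = 0 ∧
      ∀ x ∈ S', ∀ A : Set 𝓧, MeasurableSet A →
        ENNReal.ofReal a * (μ.map (ξ k)) A ≤ (Q k) x A)
    (g : ℕ → 𝓧 → ℝ) (hg : ∀ j, Measurable (g j)) :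
    ∀ (n : ℕ) (u : ℝ),
      ‖∫ ω, Complex.exp (u * (∑ j ∈ Finset.Icc 1 n, g j (ξ j ω)) * I) ∂μ‖ ≤
        Real.exp (-(a ^ 4 / 16) * ∑ j ∈ Finset.Icc 1 n,
          (1 - ‖∫ ω, Complex.exp (u * g j (ξ j ω) * I) ∂μ‖ ^ 2)) := by
  classical
  intro n u
  have ha1 : a ≤ 1 := CharFunAux2.a_le_one hξ hQ ha hmix
  set F : ℕ → ℝ := fun j => ‖∫ ω, Complex.exp (u * g j (ξ j ω) * I) ∂μ‖ with hFdef
  have hF0 : ∀ j, 0 ≤ F j := fun j => norm_nonneg _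
  have hF1 : ∀ j, F j ≤ 1 := by
    intro j
    have hb : ∀ ω, ‖Complex.exp ((u:ℂ) * (g j (ξ j ω) : ℂ) * I)‖ ≤ 1 := fun ω =>
      le_of_eq (norm_Efun g u j (ξ j ω))
    have h := norm_integral_le_of_norm_le_const (μ := μ) (Filter.Eventually.of_forall hb)
    rw [probReal_univ, mul_one] at h
    exact h
  have hSig0 : 0 ≤ ∑ j ∈ Finset.Icc 1 n, (1 - F j ^ 2) := by
    refine Finset.sum_nonneg fun j _ => ?_
    nlinarith [hF0 j, hF1 j]
  show ‖∫ ω, Complex.exp (u * (∑ j ∈ Finset.Icc 1 n, g j (ξ j ω)) * I) ∂μ‖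
      ≤ Real.exp (-(a ^ 4 / 16) * ∑ j ∈ Finset.Icc 1 n, (1 - F j ^ 2))
  rcases Nat.eq_zero_or_pos n with hn0 | hn1
  · subst hn0
    rw [show Finset.Icc 1 0 = (∅ : Finset ℕ) from Finset.Icc_eq_empty (by omega)]
    simp
  -- n ≥ 1 case
  have hE : ∀ j, Measurable (Efun g u j) := measurable_Efun hg u
  have hmeas_h : ∀ t, StronglyMeasurable (hfun Q g u n t) := by
    intro t
    induction t with
    | zero => exact stronglyMeasurable_const
    | succ t ih =>
      haveI := hQ (n - t)
      exact CharFunAux2.kernel_int_sm (Q (n - t))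
        (((hE (n - t)).mul ih.measurable).stronglyMeasurable)
  have hbd_h : ∀ t x, ‖hfun Q g u n t x‖ ≤ 1 := by
    intro t
    induction t with
    | zero => intro x; show ‖(1:ℂ)‖ ≤ 1; simp
    | succ t ih =>
      intro x
      haveI := hQ (n - t)
      have h := norm_integral_le_of_norm_le_const (μ := Q (n - t) x) (C := 1)
        (f := fun y => Efun g u (n - t) y * hfun Q g u n t y)
        (Filter.Eventually.of_forall (fun y => by
          rw [norm_mul, norm_Efun, one_mul]; exact ih y))
      rw [probReal_univ, mul_one] at h
      exact h
  have hnorm_a : ‖(a:ℂ)‖ = a := by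
    rw [Complex.norm_real, Real.norm_eq_abs, abs_of_pos ha]
  set c : ℕ → ℂ := fun t =>
    ∫ y, Efun g u (n - t) y * hfun Q g u n t y ∂(μ.map (ξ (n - t))) with hcdef
  have hBb := CharFunAux.BC_bounds (a := a) (F := F) (n := n) ha ha1 hF0 hF1
  have hB0 : ∀ t, 0 ≤ (CharFunAux.BC a F n t).1 := fun t => le_trans (hBb t).1 (hBb t).2.1
  have hC0 : ∀ t, 0 ≤ (CharFunAux.BC a F n t).2 := fun t => (hBb t).1
  haveI hprobmap : ∀ j : ℕ, IsProbabilityMeasure (μ.map (ξ j)) := fun j =>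
    Measure.isProbabilityMeasure_map (hξ j).aemeasurable
  have hT : ∀ t, t ≤ n - 1 →
      (∀ᵐ y ∂(μ.map (ξ (n - t))), ‖hfun Q g u n t y‖ ≤ (CharFunAux.BC a F n t).1) ∧
      ‖c t‖ ≤ (CharFunAux.BC a F n t).2 := by
    intro t
    induction t with
    | zero =>
      intro _
      constructor
      · refine Filter.Eventually.of_forall fun y => ?_
        show ‖(1:ℂ)‖ ≤ (CharFunAux.BC a F n 0).1
        simp [CharFunAux.BC]
      · have hmap : c 0 = ∫ ω, Efun g u n (ξ n ω) * hfun Q g u n 0 (ξ n ω) ∂μ := by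
          show (∫ y, Efun g u (n - 0) y * hfun Q g u n 0 y ∂(μ.map (ξ (n - 0)))) = _
          rw [Nat.sub_zero]
          exact integral_map (hξ n).aemeasurable
            (((hE n).mul (hmeas_h 0).measurable).aestronglyMeasurable)
        have hc0 : c 0 = ∫ ω, Complex.exp (u * g n (ξ n ω) * I) ∂μ := by
          rw [hmap]
          congr 1
          funext ω
          show Efun g u n (ξ n ω) * 1 = _
          rw [mul_one]; rfl
        show ‖c 0‖ ≤ (CharFunAux.BC a F n 0).2
        rw [hc0]
        show F n ≤ (CharFunAux.BC a F n 0).2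
        simp [CharFunAux.BC]
    | succ t ih =>
      intro ht1
      have ht : t ≤ n - 1 := by omega
      obtain ⟨ihA, ihC⟩ := ih ht
      have hk2 : 2 ≤ n - t := by omega
      have hw : Measurable (fun y => Efun g u (n - t) y * hfun Q g u n t y) :=
        (hE (n - t)).mul (hmeas_h t).measurable
      have hw1 : ∀ y, ‖Efun g u (n - t) y * hfun Q g u n t y‖ ≤ 1 := fun y => by
        rw [norm_mul, norm_Efun, one_mul]; exact hbd_h t y
      have hβae : ∀ᵐ y ∂(μ.map (ξ (n - t))),
          ‖Efun g u (n - t) y * hfun Q g u n t y‖ ≤ (CharFunAux.BC a F n t).1 := by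
        filter_upwards [ihA] with y hy
        rw [norm_mul, norm_Efun, one_mul]; exact hy
      have hdec := CharFunAux2.dec hξ hQ hMarkov ha ha1 hmix (n - t) hk2 hw hw1 (hB0 t) hβae
      have hidx : n - t - 1 = n - (t+1) := by omega
      rw [hidx] at hdec
      have hdec' : ∀ᵐ x ∂(μ.map (ξ (n - (t+1)))),
          ‖hfun Q g u n (t+1) x - (a:ℂ) * c t‖ ≤ (1-a) * (CharFunAux.BC a F n t).1 := by
        filter_upwards [hdec] with x hx
        exact hx
      constructor
      · filter_upwards [hdec'] with x hx
        have h1 : ‖hfun Q g u n (t+1) x‖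
            ≤ ‖hfun Q g u n (t+1) x - (a:ℂ) * c t‖ + ‖(a:ℂ) * c t‖ := by
          calc ‖hfun Q g u n (t+1) x‖
              = ‖(hfun Q g u n (t+1) x - (a:ℂ) * c t) + (a:ℂ) * c t‖ := by rw [sub_add_cancel]
            _ ≤ _ := norm_add_le _ _
        have h2 : ‖(a:ℂ) * c t‖ = a * ‖c t‖ := by rw [norm_mul, hnorm_a]
        have h3 : a * ‖c t‖ ≤ a * (CharFunAux.BC a F n t).2 :=
          mul_le_mul_of_nonneg_left ihC ha.le
        have hgoal : ‖hfun Q g u n (t+1) x‖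
            ≤ a * (CharFunAux.BC a F n t).2 + (1-a) * (CharFunAux.BC a F n t).1 := by
          rw [h2] at h1
          linarith
        exact le_of_le_of_eq hgoal rfl
      · have hint1 : Integrable
            (fun y => Efun g u (n - (t+1)) y * ((a:ℂ) * c t)) (μ.map (ξ (n - (t+1)))) := by
          refine CharFunAux2.integrable_of_bound
            (((hE _).mul_const _)).aestronglyMeasurable (a * ‖c t‖) fun y => ?_
          rw [norm_mul, norm_Efun, one_mul, norm_mul, hnorm_a]
        have hint2 : Integrable
            (fun y => Efun g u (n - (t+1)) y * (hfun Q g u n (t+1) y - (a:ℂ) * c t))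
            (μ.map (ξ (n - (t+1)))) := by
          refine CharFunAux2.integrable_of_bound
            ((hE _).mul ((hmeas_h (t+1)).measurable.sub_const _)).aestronglyMeasurable
            (1 + a * ‖c t‖) fun y => ?_
          rw [norm_mul, norm_Efun, one_mul]
          calc ‖hfun Q g u n (t+1) y - (a:ℂ) * c t‖
              ≤ ‖hfun Q g u n (t+1) y‖ + ‖(a:ℂ) * c t‖ := norm_sub_le _ _
            _ ≤ 1 + a * ‖c t‖ := by
                rw [norm_mul, hnorm_a]
                exact add_le_add (hbd_h (t+1) y) le_rfl
        have hsplit : c (t+1)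
            = (∫ y, Efun g u (n - (t+1)) y ∂(μ.map (ξ (n - (t+1))))) * ((a:ℂ) * c t)
            + ∫ y, Efun g u (n - (t+1)) y * (hfun Q g u n (t+1) y - (a:ℂ) * c t)
                ∂(μ.map (ξ (n - (t+1)))) := by
          show (∫ y, Efun g u (n - (t+1)) y * hfun Q g u n (t+1) y
              ∂(μ.map (ξ (n - (t+1))))) = _
          rw [← integral_mul_const, ← integral_add hint1 hint2]
          congr 1
          funext y
          ring
        have hfmap : ∫ y, Efun g u (n - (t+1)) y ∂(μ.map (ξ (n - (t+1))))
            = ∫ ω, Complex.exp (u * g (n - (t+1)) (ξ (n - (t+1)) ω) * I) ∂μ :=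
          integral_map (hξ _).aemeasurable (hE _).aestronglyMeasurable
        have hterm1 : ‖(∫ y, Efun g u (n - (t+1)) y ∂(μ.map (ξ (n - (t+1)))))
            * ((a:ℂ) * c t)‖ ≤ F (n - (t+1)) * (a * (CharFunAux.BC a F n t).2) := by
          rw [norm_mul, norm_mul, hnorm_a, hfmap]
          refine mul_le_mul le_rfl ?_ (by positivity) (hF0 _)
          exact mul_le_mul_of_nonneg_left ihC ha.le
        have hterm2 : ‖∫ y, Efun g u (n - (t+1)) y * (hfun Q g u n (t+1) y - (a:ℂ) * c t)
            ∂(μ.map (ξ (n - (t+1))))‖ ≤ (1-a) * (CharFunAux.BC a F n t).1 := by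
          have hb := norm_integral_le_of_norm_le_const (μ := μ.map (ξ (n - (t+1))))
            (f := fun y => Efun g u (n - (t+1)) y * (hfun Q g u n (t+1) y - (a:ℂ) * c t))
            (C := (1-a) * (CharFunAux.BC a F n t).1) ?_
          · rwa [probReal_univ, mul_one] at hb
          · filter_upwards [hdec'] with y hy
            rw [norm_mul, norm_Efun, one_mul]
            exact hy
        show ‖c (t+1)‖ ≤ (CharFunAux.BC a F n (t+1)).2
        have hBC2 : (CharFunAux.BC a F n (t+1)).2
            = a * F (n - t - 1) * (CharFunAux.BC a F n t).2
              + (1-a) * (CharFunAux.BC a F n t).1 := rfl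
        rw [hBC2, show n - t - 1 = n - (t+1) by omega]
        calc ‖c (t+1)‖ ≤ _ + _ := by rw [hsplit]; exact norm_add_le _ _
          _ ≤ F (n - (t+1)) * (a * (CharFunAux.BC a F n t).2)
              + (1-a) * (CharFunAux.BC a F n t).1 := add_le_add hterm1 hterm2
          _ = a * F (n - (t+1)) * (CharFunAux.BC a F n t).2
              + (1-a) * (CharFunAux.BC a F n t).1 := by ring
  -- the invariant functional
  set P : ℕ → ℂ := fun m => ∫ ω, (∏ j ∈ Finset.Icc 1 m, Efun g u j (ξ j ω))
    * hfun Q g u n (n - m) (ξ m ω) ∂μ with hPdef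
  have hΨmeas : ∀ m : ℕ, Measurable[⨆ i : Fin m, MeasurableSpace.comap (ξ i) inferInstance]
      (fun ω => ∏ j ∈ Finset.Icc 1 (m-1), Efun g u j (ξ j ω)) := by
    intro m
    refine Finset.measurable_prod _ fun j hj => ?_
    rw [Finset.mem_Icc] at hj
    have hjm : j < m := by omega
    exact (hE j).comp (Measurable.of_comap_le
      (le_iSup (fun i : Fin m => MeasurableSpace.comap (ξ i) inferInstance) ⟨j, hjm⟩))
  have hΨb : ∀ (m : ℕ) (ω : Ω), ‖∏ j ∈ Finset.Icc 1 m, Efun g u j (ξ j ω)‖ ≤ 1 := by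
    intro m ω
    rw [norm_prod]
    exact le_of_eq (Finset.prod_eq_one fun j _ => norm_Efun g u j (ξ j ω))
  have hchain : ∀ m, 1 ≤ m → m ≤ n → P m = P (m-1) := by
    intro m hm1 hmn
    have hφmeas : Measurable (fun y => Efun g u m y * hfun Q g u n (n - m) y) :=
      (hE m).mul (hmeas_h (n-m)).measurable
    have hφb : ∀ y, ‖Efun g u m y * hfun Q g u n (n - m) y‖ ≤ 1 := fun y => by
      rw [norm_mul, norm_Efun, one_mul]; exact hbd_h _ y
    have hstep := CharFunAux2.step hξ hQ hMarkov m hm1 (hΨmeas m)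
      (fun ω => hΨb (m-1) ω) hφmeas hφb
    have hprodsplit : ∀ ω : Ω, (∏ j ∈ Finset.Icc 1 m, Efun g u j (ξ j ω))
        = (∏ j ∈ Finset.Icc 1 (m-1), Efun g u j (ξ j ω)) * Efun g u m (ξ m ω) := by
      intro ω
      have hm : m = (m-1) + 1 := by omega
      rw [hm, Finset.prod_Icc_succ_top (by omega : 1 ≤ m - 1 + 1), ← hm]
    have hL : P m = ∫ ω, (∏ j ∈ Finset.Icc 1 (m-1), Efun g u j (ξ j ω))
        * (Efun g u m (ξ m ω) * hfun Q g u n (n - m) (ξ m ω)) ∂μ := by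
      show (∫ ω, (∏ j ∈ Finset.Icc 1 m, Efun g u j (ξ j ω))
        * hfun Q g u n (n - m) (ξ m ω) ∂μ) = _
      congr 1
      funext ω
      rw [hprodsplit ω]
      ring
    have hR : ∀ ω : Ω, (∫ y, Efun g u m y * hfun Q g u n (n - m) y ∂(Q m (ξ (m-1) ω)))
        = hfun Q g u n (n - (m-1)) (ξ (m-1) ω) := by
      intro ω
      have h1 : n - (m-1) = (n - m) + 1 := by omega
      rw [h1]
      show _ = ∫ y, Efun g u (n - (n - m)) y * hfun Q g u n (n - m) y
        ∂(Q (n - (n - m)) (ξ (m-1) ω))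
      rw [show n - (n - m) = m by omega]
    rw [hL, hstep]
    show _ = ∫ ω, (∏ j ∈ Finset.Icc 1 (m-1), Efun g u j (ξ j ω))
      * hfun Q g u n (n - (m-1)) (ξ (m-1) ω) ∂μ
    congr 1
    funext ω
    rw [hR ω]
  have hPchain : ∀ m, 1 ≤ m → m ≤ n → P m = P 1 := by
    intro m
    induction m with
    | zero => intro h; omega
    | succ m ihm =>
      intro _ hmn
      rcases Nat.eq_zero_or_pos m with hm0 | hm1
      · subst hm0; rfl
      · have h := hchain (m+1) (by omega) hmn
        rw [show m + 1 - 1 = m from rfl] at h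
        rw [h]
        exact ihm (by omega) (by omega)
  have hPn_eq : (∫ ω, Complex.exp (u * (∑ j ∈ Finset.Icc 1 n, g j (ξ j ω)) * I) ∂μ) = P n := by
    show _ = ∫ ω, (∏ j ∈ Finset.Icc 1 n, Efun g u j (ξ j ω))
      * hfun Q g u n (n - n) (ξ n ω) ∂μ
    congr 1
    funext ω
    rw [show n - n = 0 from Nat.sub_self n]
    show _ = (∏ j ∈ Finset.Icc 1 n, Efun g u j (ξ j ω)) * 1
    rw [mul_one]
    have h1 : (u:ℂ) * ((∑ j ∈ Finset.Icc 1 n, g j (ξ j ω) : ℝ) : ℂ) * I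
        = ∑ j ∈ Finset.Icc 1 n, ((u:ℂ) * ((g j (ξ j ω) : ℝ) : ℂ) * I) := by
      rw [Complex.ofReal_sum]
      rw [mul_comm ((u:ℂ)) _, mul_assoc, Finset.sum_mul]
      exact Finset.sum_congr rfl fun j _ => by ring
    rw [h1, Complex.exp_sum]
    rfl
  have hP1 : P 1 = c (n-1) := by
    show (∫ ω, (∏ j ∈ Finset.Icc 1 1, Efun g u j (ξ j ω))
      * hfun Q g u n (n - 1) (ξ 1 ω) ∂μ) = ∫ y, Efun g u (n - (n-1)) y * hfun Q g u n (n-1) y ∂(μ.map (ξ (n - (n-1))))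
    rw [show n - (n - 1) = 1 by omega]
    rw [integral_map (f := fun y => Efun g u 1 y * hfun Q g u n (n-1) y) (hξ 1).aemeasurable
      (((hE 1).mul (hmeas_h (n-1)).measurable).aestronglyMeasurable)]
    congr 1
    funext ω
    rw [Finset.Icc_self, Finset.prod_singleton]
  have hVC : ‖P 1‖ ≤ (CharFunAux.BC a F n (n-1)).2 := by
    rw [hP1]; exact (hT (n-1) le_rfl).2
  have hVB : ‖P 1‖ ≤ (CharFunAux.BC a F n (n-1)).1 := by
    rw [hP1]
    have hae := (hT (n-1) le_rfl).1
    have hb := norm_integral_le_of_norm_le_const (μ := μ.map (ξ (n - (n-1))))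
      (f := fun y => Efun g u (n - (n-1)) y * hfun Q g u n (n-1) y)
      (C := (CharFunAux.BC a F n (n-1)).1) ?_
    · rwa [probReal_univ, mul_one] at hb
    · filter_upwards [hae] with y hy
      rw [norm_mul, norm_Efun, one_mul]
      exact hy
  have hLP : ‖∫ ω, Complex.exp (u * (∑ j ∈ Finset.Icc 1 n, g j (ξ j ω)) * I) ∂μ‖ = ‖P 1‖ := by
    rw [hPn_eq, hPchain n hn1 le_rfl]
  rcases eq_or_lt_of_le (Nat.succ_le_of_lt hn1) with hn1' | hn2
  · -- n = 1
    have hn : n = 1 := hn1'.symm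
    subst hn
    rw [hLP]
    rw [show Finset.Icc 1 1 = {1} from Finset.Icc_self 1, Finset.sum_singleton]
    have hP1F : ‖P 1‖ ≤ F 1 := by
      have h := hVC
      have : (CharFunAux.BC a F 1 0).2 = F 1 := rfl
      rw [show (1:ℕ) - 1 = 0 from rfl, this] at h
      exact h
    have hexp := Real.add_one_le_exp (-(a^4/16) * (1 - F 1^2))
    have ha2 : a^2 ≤ 1 := by nlinarith
    have ha4 : a^4 ≤ 1 := by nlinarith [mul_le_mul ha2 ha2 (sq_nonneg a) zero_le_one]
    have hkey : F 1 ≤ Real.exp (-(a^4/16) * (1 - F 1^2)) := by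
      nlinarith [hF0 1, hF1 1, mul_nonneg (sub_nonneg.mpr (hF1 1)) (hF0 1),
        sq_nonneg (1 - F 1), mul_nonneg (mul_nonneg ha.le ha.le) (mul_nonneg ha.le ha.le)]
    calc ‖P 1‖ ≤ F 1 := hP1F
      _ ≤ _ := hkey
  · -- 2 ≤ n
    have hn2' : 2 ≤ n := hn2
    set e : ℕ → ℝ := fun j => Real.exp (-(a^2/2) * (1 - F j ^ 2)) with hedef
    have hprod := CharFunAux.BC_prod (a := a) (F := F) (n := n) ha ha1 hF0 hF1 (n-2) (by omega)
    rw [show n - (n-2) = 2 by omega, show n - 2 + 1 = n - 1 by omega] at hprod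
    have hCn1 : (CharFunAux.BC a F n (n-1)).2
        ≤ (a * F 1 + (1-a)) * (CharFunAux.BC a F n (n-2)).1 := by
      have hrec : (CharFunAux.BC a F n (n-1)).2
          = a * F (n - (n-2) - 1) * (CharFunAux.BC a F n (n-2)).2
            + (1-a) * (CharFunAux.BC a F n (n-2)).1 := by
        rw [show n - 1 = (n-2) + 1 by omega]
        simp [CharFunAux.BC]
      rw [hrec, show n - (n-2) - 1 = 1 by omega]
      have h1 := (hBb (n-2)).2.1
      have h2 := hC0 (n-2)
      have h3 := hB0 (n-2)
      nlinarith [hF0 1, hF1 1, mul_nonneg ha.le (hF0 1),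
        mul_le_mul_of_nonneg_left h1 (mul_nonneg ha.le (hF0 1))]
    have hsq : ‖P 1‖^2 ≤ (a * F 1 + (1-a))
        * ((CharFunAux.BC a F n (n-2)).1 * (CharFunAux.BC a F n (n-1)).1) := by
      have h1 : ‖P 1‖ * ‖P 1‖ ≤ (CharFunAux.BC a F n (n-1)).2 * (CharFunAux.BC a F n (n-1)).1 :=
        mul_le_mul hVC hVB (norm_nonneg _) (hC0 _)
      have h2 : (CharFunAux.BC a F n (n-1)).2 * (CharFunAux.BC a F n (n-1)).1
          ≤ ((a * F 1 + (1-a)) * (CharFunAux.BC a F n (n-2)).1) * (CharFunAux.BC a F n (n-1)).1 :=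
        mul_le_mul_of_nonneg_right hCn1 (hB0 _)
      calc ‖P 1‖^2 = ‖P 1‖ * ‖P 1‖ := sq ‖P 1‖
        _ ≤ _ := le_trans h1 h2
        _ = _ := by ring
    have hp1e : a * F 1 + (1-a) ≤ e 1 := by
      have hq := CharFunAux.q_le_e (a := a) (F := F) (n := 1) ha ha1 (hF0 1) (hF1 1)
      have : a * F 1 + (1-a) ≤ 1 - a^2 * (1 - F 1) := by
        nlinarith [mul_nonneg (mul_nonneg ha.le (sub_nonneg.mpr ha1)) (sub_nonneg.mpr (hF1 1))]
      exact le_trans this hq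
    have hsplitIcc : Finset.Icc 1 n = insert 1 (Finset.Icc 2 n) := by
      rw [show Finset.Icc 2 n = Finset.Ioc 1 n from Finset.Icc_add_one_left_eq_Ioc 1 n,
        Finset.Ioc_insert_left (by omega : 1 ≤ n)]
    have hfinal2 : ‖P 1‖^2 ≤ ∏ j ∈ Finset.Icc 1 n, e j := by
      rw [hsplitIcc, Finset.prod_insert (by simp)]
      have hBBe : (CharFunAux.BC a F n (n-2)).1 * (CharFunAux.BC a F n (n-1)).1
          ≤ ∏ j ∈ Finset.Icc 2 n, e j := hprod
      calc ‖P 1‖^2 ≤ (a * F 1 + (1-a))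
          * ((CharFunAux.BC a F n (n-2)).1 * (CharFunAux.BC a F n (n-1)).1) := hsq
        _ ≤ e 1 * ∏ j ∈ Finset.Icc 2 n, e j := by
            refine mul_le_mul hp1e hBBe ?_ (Real.exp_nonneg _)
            exact mul_nonneg (hB0 _) (hB0 _)
    have hexp_prod : ∏ j ∈ Finset.Icc 1 n, e j
        = Real.exp (∑ j ∈ Finset.Icc 1 n, (-(a^2/2) * (1 - F j^2))) := by
      rw [Real.exp_sum]
    have hnorm : ‖P 1‖ ≤ Real.exp (-(a^2/4) * ∑ j ∈ Finset.Icc 1 n, (1 - F j^2)) := by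
      have h2 : (Real.exp (-(a^2/4) * ∑ j ∈ Finset.Icc 1 n, (1 - F j^2)))^2
          = ∏ j ∈ Finset.Icc 1 n, e j := by
        rw [hexp_prod, sq, ← Real.exp_add]
        congr 1
        rw [show ∑ j ∈ Finset.Icc 1 n, (-(a^2/2) * (1 - F j^2))
            = -(a^2/2) * ∑ j ∈ Finset.Icc 1 n, (1 - F j^2) from (Finset.mul_sum _ _ _).symm]
        ring
      calc ‖P 1‖ = Real.sqrt (‖P 1‖^2) := (Real.sqrt_sq (norm_nonneg _)).symm
        _ ≤ Real.sqrt ((Real.exp (-(a^2/4) * ∑ j ∈ Finset.Icc 1 n, (1 - F j^2)))^2) := by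
            refine Real.sqrt_le_sqrt ?_
            rw [h2]
            exact hfinal2
        _ = Real.exp (-(a^2/4) * ∑ j ∈ Finset.Icc 1 n, (1 - F j^2)) :=
            Real.sqrt_sq (Real.exp_nonneg _)
    have hmono : Real.exp (-(a^2/4) * ∑ j ∈ Finset.Icc 1 n, (1 - F j^2))
        ≤ Real.exp (-(a^4/16) * ∑ j ∈ Finset.Icc 1 n, (1 - F j^2)) := by
      apply Real.exp_le_exp.mpr
      have ha2 : a^2 ≤ 1 := by nlinarith
      have h1 : a^4/16 ≤ a^2/4 := by nlinarith [mul_le_mul_of_nonneg_left ha2 (sq_nonneg a)]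
      nlinarith [hSig0]
    rw [hLP]
    calc ‖P 1‖ ≤ _ := hnorm
      _ ≤ _ := hmono
end

section
/- For sigma-algebras A and B on a probability space, the phi-mixing coefficient satisfies φ(A,B) ≤ 1 - ψ'(A,B), where φ(A,B) = sup{ (P(A∩B) - P(A)P(B))/P(A) : A ∈ A, B ∈ B, P(A) > 0 } and ψ'(A,B) = inf{ P(A∩B)/(P(A)P(B)) : P(A)P(B) > 0 }. -/
open MeasureTheory

/-- phi-mixing coefficient of two sub-sigma-algebras. -/
noncomputable def phiMix {Ω : Type*} [MeasurableSpace Ω] (μ : Measure Ω)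
    (𝒜 ℬ : MeasurableSpace Ω) : ℝ :=
  sSup { r : ℝ | ∃ A B : Set Ω, MeasurableSet[𝒜] A ∧ MeasurableSet[ℬ] B ∧
    0 < (μ A).toReal ∧
    r = ((μ (A ∩ B)).toReal - (μ A).toReal * (μ B).toReal) / (μ A).toReal }

theorem phi_le_one_sub_psiLower {Ω : Type*} [m : MeasurableSpace Ω] (μ : Measure Ω)
    [IsProbabilityMeasure μ] (𝒜 ℬ : MeasurableSpace Ω)
    (h𝒜 : 𝒜 ≤ m) (hℬ : ℬ ≤ m) :
    @phiMix Ω m μ 𝒜 ℬ ≤ 1 - @psiLower Ω m μ 𝒜 ℬ := by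
  unfold phiMix psiLower
  set T := { r : ℝ | ∃ A B : Set Ω, MeasurableSet[𝒜] A ∧ MeasurableSet[ℬ] B ∧
    0 < (μ A).toReal * (μ B).toReal ∧
    r = (μ (A ∩ B)).toReal / ((μ A).toReal * (μ B).toReal) } with hT
  have hT1 : (1 : ℝ) ∈ T := by
    refine ⟨Set.univ, Set.univ, MeasurableSet.univ, MeasurableSet.univ, by simp, by simp⟩
  have hTbdd : BddBelow T := by
    refine ⟨0, fun r hr => ?_⟩
    obtain ⟨A, B, _, _, hpos, rfl⟩ := hr
    have h0 : (0:ℝ) ≤ (μ (A ∩ B)).toReal := ENNReal.toReal_nonneg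
    positivity
  have hInf1 : sInf T ≤ 1 := csInf_le hTbdd hT1
  apply Real.sSup_le _ (by linarith)
  rintro r ⟨A, B, hA, hB, hApos, rfl⟩
  have mA := h𝒜 _ hA
  have mB := hℬ _ hB
  set s := sInf T with hs
  set a := (μ A).toReal with ha
  set b := (μ B).toReal with hb
  set c := (μ (A ∩ B)).toReal with hc
  set d := (μ (A ∩ Bᶜ)).toReal with hd
  set b' := (μ Bᶜ).toReal with hb'
  have hfin : ∀ u : Set Ω, μ u ≠ ⊤ := fun u => measure_ne_top μ u
  have hcd : c + d = a := by
    have h := measure_inter_add_diff (μ := μ) A mB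
    rw [Set.diff_eq] at h
    have h2 := congrArg ENNReal.toReal h
    rwa [ENNReal.toReal_add (hfin _) (hfin _)] at h2
  have hbb' : b + b' = 1 := by
    have h := measure_add_measure_compl (μ := μ) mB
    rw [measure_univ] at h
    have h2 := congrArg ENNReal.toReal h
    rwa [ENNReal.toReal_add (hfin _) (hfin _), ENNReal.toReal_one] at h2
  have hdb' : d ≤ b' := by
    exact ENNReal.toReal_le_toReal (hfin _) (hfin _) |>.2
      (measure_mono Set.inter_subset_right)
  have hd0 : (0:ℝ) ≤ d := ENNReal.toReal_nonneg
  have hb0 : (0:ℝ) ≤ b := ENNReal.toReal_nonneg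
  have hb'le1 : b' ≤ 1 := by linarith
  rw [div_le_iff₀ hApos]
  rcases eq_or_lt_of_le (ENNReal.toReal_nonneg : (0:ℝ) ≤ b') with h0 | hb'pos
  · -- b' = 0 so d = 0, b = 1, c = a
    have hd' : d = 0 := le_antisymm (by linarith) hd0
    have : b = 1 := by linarith
    nlinarith
  · -- b' > 0 : use the set pair (A, Bᶜ) in T
    have hmem : d / (a * b') ∈ T := by
      refine ⟨A, Bᶜ, hA, hB.compl, ?_, rfl⟩
      rw [← ha, ← hb']
      positivity
    have hle : s ≤ d / (a * b') := csInf_le hTbdd hmem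
    have hab' : a * b' ≠ 0 := by positivity
    have hdeq : d = (d / (a * b')) * (a * b') := by rw [div_mul_cancel₀]; exact hab'
    set t := d / (a * b') with ht
    have key : 0 ≤ 1 - s - b' + t * b' := by
      nlinarith [mul_nonneg (sub_nonneg.2 hb'le1) (sub_nonneg.2 hInf1),
        mul_nonneg hb'pos.le (sub_nonneg.2 hle)]
    nlinarith [mul_nonneg hApos.le key]
end

section
/- Suppose there exist δ > 0, n₀ ∈ ℕ, and a function g with exp(−g) integrable such that (a²/16)Σ_{k=1}^n (1 − |f_k(u/B_n)|²) > g(u) for all 1 ≤ |u| ≤ δB_n and n > n₀ (Condition A), where f_k is the characteristic function of X_k, and the Markov-chain characteristic function bound |E exp(iuS_n)| ≤ exp(−(a⁴/16)Σ_{j=1}^n (1−|f_j(u)|²)) holds. Then lim_{T→∞} limsup_n ∫_{T ≤ |u| ≤ δ B_n} |E exp(iu S_n / B_n)| du = 0. -/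
open MeasureTheory Complex Filter

/-- Verification of condition (D₁): under Condition A and the characteristic
function bound, `lim_T limsup_n ∫_{T ≤ |u| ≤ δB_n} |E exp(iuS_n/B_n)| du = 0`. -/
theorem conditionA_implies_D1 {Ω : Type*} [MeasurableSpace Ω]
    (μ : Measure Ω) [IsProbabilityMeasure μ]
    (S : ℕ → Ω → ℝ) (hS : ∀ n, Measurable (S n))
    (f : ℕ → ℝ → ℂ) (B : ℕ → ℝ) (hB : Tendsto B atTop atTop)
    (a : ℝ) (ha : 0 < a) (δ : ℝ) (hδ : 0 < δ) (n₀ : ℕ)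
    (g : ℝ → ℝ) (hgint : Integrable (fun u => Real.exp (-g u)) volume)
    (hcondA : ∀ n : ℕ, n₀ < n → ∀ u : ℝ, 1 ≤ |u| → |u| ≤ δ * B n →
      g u < a ^ 4 / 16 * ∑ k ∈ Finset.Icc 1 n, (1 - ‖f k (u / B n)‖ ^ 2))
    (hbound : ∀ (n : ℕ) (u : ℝ),
      ‖∫ ω, Complex.exp (u * S n ω * I) ∂μ‖ ≤
        Real.exp (-(a ^ 4 / 16) * ∑ j ∈ Finset.Icc 1 n, (1 - ‖f j u‖ ^ 2))) :
    Tendsto (fun T : ℝ =>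
      limsup (fun n : ℕ =>
        ∫ u in {u : ℝ | T ≤ |u| ∧ |u| ≤ δ * B n},
          ‖∫ ω, Complex.exp (u * (S n ω / B n) * I) ∂μ‖) atTop)
      atTop (nhds 0) := by
  -- the tail integral of exp(-g)
  set tail : ℝ → ℝ := fun T => ∫ u in {u : ℝ | T ≤ |u|}, Real.exp (-g u) with htaildef
  have hmeasT : ∀ T : ℝ, MeasurableSet {u : ℝ | T ≤ |u|} := fun T =>
    measurableSet_le measurable_const measurable_id.abs
  -- the tail integral tends to 0
  have htail : Tendsto tail atTop (nhds 0) := by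
    have heq : tail = fun T => ∫ u : ℝ,
        Set.indicator {u : ℝ | T ≤ |u|} (fun u => Real.exp (-g u)) u := by
      funext T
      rw [htaildef]
      exact (integral_indicator (hmeasT T)).symm
    have hmain := tendsto_integral_filter_of_dominated_convergence
      (μ := (volume : Measure ℝ)) (l := (atTop : Filter ℝ))
      (F := fun T u => Set.indicator {u : ℝ | T ≤ |u|} (fun u => Real.exp (-g u)) u)
      (f := fun _ => (0 : ℝ)) (fun u => Real.exp (-g u))
      (Eventually.of_forall fun T =>
        hgint.aestronglyMeasurable.indicator (hmeasT T))
      (Eventually.of_forall fun T => Eventually.of_forall fun u => by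
        rw [Real.norm_eq_abs, _root_.abs_of_nonneg
          (Set.indicator_nonneg (fun x _ => (Real.exp_pos _).le) u)]
        exact Set.indicator_le_self' (fun x _ => (Real.exp_pos _).le) u)
      hgint
      (Eventually.of_forall fun u => by
        refine tendsto_const_nhds.congr' ?_
        filter_upwards [eventually_gt_atTop |u|] with T hT
        simp [Set.indicator_of_notMem, not_le.mpr hT])
    rw [heq]
    simpa using hmain
  -- pointwise bound on the integrand
  have hkey : ∀ T : ℝ, 1 ≤ T → ∀ n : ℕ, n₀ < n → ∀ u : ℝ,
      u ∈ {u : ℝ | T ≤ |u| ∧ |u| ≤ δ * B n} →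
      ‖∫ ω, Complex.exp (u * (S n ω / B n) * I) ∂μ‖ ≤ Real.exp (-g u) := by
    intro T hT n hn u hu
    obtain ⟨hu1, hu2⟩ := hu
    have h1 : (1 : ℝ) ≤ |u| := le_trans hT hu1
    have heq : ∀ ω, Complex.exp (u * (S n ω / B n) * I)
        = Complex.exp ((u / B n : ℝ) * S n ω * I) := by
      intro ω; push_cast; ring_nf
    calc ‖∫ ω, Complex.exp (u * (S n ω / B n) * I) ∂μ‖
        = ‖∫ ω, Complex.exp ((u / B n : ℝ) * S n ω * I) ∂μ‖ := by
          simp_rw [heq]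
      _ ≤ Real.exp (-(a ^ 4 / 16) * ∑ j ∈ Finset.Icc 1 n,
            (1 - ‖f j (u / B n)‖ ^ 2)) := hbound n (u / B n)
      _ ≤ Real.exp (-g u) := by
          apply Real.exp_le_exp.2
          have := hcondA n hn u h1 hu2
          linarith
  -- squeeze
  have hupper : ∀ᶠ T : ℝ in atTop,
      limsup (fun n : ℕ =>
        ∫ u in {u : ℝ | T ≤ |u| ∧ |u| ≤ δ * B n},
          ‖∫ ω, Complex.exp (u * (S n ω / B n) * I) ∂μ‖) atTop ≤ tail T := by
    filter_upwards [eventually_ge_atTop (1 : ℝ)] with T hT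
    have hle : ∀ n : ℕ, n₀ < n →
        (∫ u in {u : ℝ | T ≤ |u| ∧ |u| ≤ δ * B n},
          ‖∫ ω, Complex.exp (u * (S n ω / B n) * I) ∂μ‖) ≤ tail T := by
      intro n hn
      have hs : MeasurableSet {u : ℝ | T ≤ |u| ∧ |u| ≤ δ * B n} :=
        (measurableSet_le measurable_const measurable_id.abs).inter
          (measurableSet_le measurable_id.abs measurable_const)
      have step1 : (∫ u in {u : ℝ | T ≤ |u| ∧ |u| ≤ δ * B n},
            ‖∫ ω, Complex.exp (u * (S n ω / B n) * I) ∂μ‖)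
          ≤ ∫ u in {u : ℝ | T ≤ |u| ∧ |u| ≤ δ * B n}, Real.exp (-g u) := by
        refine integral_mono_of_nonneg (Eventually.of_forall fun u => norm_nonneg _)
          (hgint.restrict) ?_
        exact (ae_restrict_iff' hs).2 (Eventually.of_forall fun u hu =>
          hkey T hT n hn u hu)
      have step2 : (∫ u in {u : ℝ | T ≤ |u| ∧ |u| ≤ δ * B n}, Real.exp (-g u))
          ≤ tail T := by
        refine setIntegral_mono_set hgint.integrableOn
          (Eventually.of_forall fun u => (Real.exp_pos _).le) ?_
        exact HasSubset.Subset.eventuallyLE fun u hu => hu.1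
      exact step1.trans step2
    refine limsup_le_of_le ?_ ?_
    · exact isCoboundedUnder_le_of_le atTop fun n => integral_nonneg fun u => norm_nonneg _
    · filter_upwards [eventually_gt_atTop n₀] with n hn using hle n hn
  have hlower : ∀ᶠ T : ℝ in atTop, (0 : ℝ) ≤
      limsup (fun n : ℕ =>
        ∫ u in {u : ℝ | T ≤ |u| ∧ |u| ≤ δ * B n},
          ‖∫ ω, Complex.exp (u * (S n ω / B n) * I) ∂μ‖) atTop := by
    filter_upwards [eventually_ge_atTop (1 : ℝ)] with T hT
    refine le_limsup_of_frequently_le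
      (Frequently.of_forall fun n => integral_nonneg fun u => norm_nonneg _) ?_
    refine ⟨tail T, eventually_map.2 ?_⟩
    filter_upwards [eventually_gt_atTop n₀] with n hn
    have hs : MeasurableSet {u : ℝ | T ≤ |u| ∧ |u| ≤ δ * B n} :=
      (measurableSet_le measurable_const measurable_id.abs).inter
        (measurableSet_le measurable_id.abs measurable_const)
    calc (∫ u in {u : ℝ | T ≤ |u| ∧ |u| ≤ δ * B n},
          ‖∫ ω, Complex.exp (u * (S n ω / B n) * I) ∂μ‖)
        ≤ ∫ u in {u : ℝ | T ≤ |u| ∧ |u| ≤ δ * B n}, Real.exp (-g u) := by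
          refine integral_mono_of_nonneg (Eventually.of_forall fun u => norm_nonneg _)
            (hgint.restrict) ?_
          exact (ae_restrict_iff' hs).2 (Eventually.of_forall fun u hu =>
            hkey T hT n hn u hu)
      _ ≤ tail T := by
          refine setIntegral_mono_set hgint.integrableOn
            (Eventually.of_forall fun u => (Real.exp_pos _).le) ?_
          exact HasSubset.Subset.eventuallyLE fun u hu => hu.1
  exact tendsto_of_tendsto_of_tendsto_of_le_of_le' tendsto_const_nhds htail hlower hupper
end
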